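/- arXiv:2012.15707 — 5 statements merged into one kernel-verified Lean document; each statement's English description precedes it below -/
import Mathlib

section
/- Let T ≃ k-vect be a right admissible subcategory of a k-linear Ext¹-finite exact category E, with irreducible object T₀, and let Q be a projective object of the perpendicular exact category T^{⊥}. Then the universal extension R of Q by T₀, i.e. the middle term of the conflation T₀ ⊗ Ext¹(Q,T₀)^∨ → R → Q given by the canonical class, is a projective object of E, and T₀ itself is projective in E. -/
set_option linter.unusedSectionVars false
set_option maxHeartbeats 1000000


open CategoryTheory CategoryTheory.Limits ZeroObject

universe v u

namespace ExactCatPaper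

variable (E : Type u) [Category.{v} E] [Preadditive E] [HasZeroObject E]

/-- An exact structure on an additive category `E`, following Quillen/Keller:
a class of conflations (kernel–cokernel pairs) closed under isomorphism,
containing identities, with deflations closed under composition and stable
under pullback, and inflations stable under pushout. -/
structure ExactStructure where
  conf : ∀ {X Y Z : E}, (X ⟶ Y) → (Y ⟶ Z) → Prop
  comp_zero : ∀ {X Y Z : E} {i : X ⟶ Y} {d : Y ⟶ Z}, conf i d → i ≫ d = 0
  is_kernel : ∀ {X Y Z : E} {i : X ⟶ Y} {d : Y ⟶ Z}, conf i d →
    ∀ {W : E} (f : W ⟶ Y), f ≫ d = 0 → ∃! g : W ⟶ X, g ≫ i = f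
  is_cokernel : ∀ {X Y Z : E} {i : X ⟶ Y} {d : Y ⟶ Z}, conf i d →
    ∀ {W : E} (f : Y ⟶ W), i ≫ f = 0 → ∃! g : Z ⟶ W, d ≫ g = f
  conf_iso : ∀ {X Y Z X' Y' Z' : E} (eX : X ≅ X') (eY : Y ≅ Y') (eZ : Z ≅ Z')
      {i : X ⟶ Y} {d : Y ⟶ Z}, conf i d →
      conf (eX.inv ≫ i ≫ eY.hom) (eY.inv ≫ d ≫ eZ.hom)
  conf_id : ∀ X : E, conf (0 : (0 : E) ⟶ X) (𝟙 X)
  defl_comp : ∀ {X Y Z : E} {d : X ⟶ Y} {d' : Y ⟶ Z},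
      (∃ (A : E) (i : A ⟶ X), conf i d) → (∃ (A : E) (i : A ⟶ Y), conf i d') →
      ∃ (A : E) (i : A ⟶ X), conf i (d ≫ d')
  pullback_defl : ∀ {Y Z W : E} (d : Y ⟶ Z) (f : W ⟶ Z),
      (∃ (A : E) (i : A ⟶ Y), conf i d) →
      ∃ (P : E) (p₁ : P ⟶ Y) (p₂ : P ⟶ W), IsPullback p₁ p₂ d f ∧
        ∃ (A : E) (i : A ⟶ P), conf i p₂
  pushout_infl : ∀ {X Y W : E} (i : X ⟶ Y) (f : X ⟶ W),
      (∃ (Z : E) (d : Y ⟶ Z), conf i d) →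
      ∃ (P : E) (j : W ⟶ P) (g : Y ⟶ P), IsPushout i f g j ∧
        ∃ (Z : E) (d : P ⟶ Z), conf j d

variable {E}

/-- `i` is an inflation: it is part of some conflation. -/
def ExactStructure.IsInflation (S : ExactStructure E) {X Y : E} (i : X ⟶ Y) : Prop :=
  ∃ (Z : E) (d : Y ⟶ Z), S.conf i d

/-- `d` is a deflation: it is part of some conflation. -/
def ExactStructure.IsDeflation (S : ExactStructure E) {Y Z : E} (d : Y ⟶ Z) : Prop :=
  ∃ (X : E) (i : X ⟶ Y), S.conf i d

/-- The right Hom-orthogonal `T^{⊥₀}` of a full subcategory. -/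
def homOrthRight (T : Set E) : Set E :=
  {X | ∀ t ∈ T, ∀ f : t ⟶ X, f = 0}

/-- The left Hom-orthogonal `^{⊥₀}F` of a full subcategory. -/
def homOrthLeft (F : Set E) : Set E :=
  {X | ∀ f' ∈ F, ∀ g : X ⟶ f', g = 0}

/-- A full subcategory is closed under extensions. -/
def ExtClosed (S : ExactStructure E) (T : Set E) : Prop :=
  ∀ {X Y Z : E} {i : X ⟶ Y} {d : Y ⟶ Z}, S.conf i d → X ∈ T → Z ∈ T → Y ∈ T

/-- `T` is weakly right admissible: a fully exact (extension-closed) subcategory such that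
the inclusion admits a right adjoint (expressed pointwise as a coreflection) whose
adjunction counit is an inflation. -/
def IsWeaklyRightAdmissible (S : ExactStructure E) (T : Set E) : Prop :=
  ExtClosed S T ∧
  ∀ X : E, ∃ (T' : E) (ε : T' ⟶ X), T' ∈ T ∧ S.IsInflation ε ∧
    ∀ W : E, W ∈ T → ∀ f : W ⟶ X, ∃! g : W ⟶ T', g ≫ ε = f

/-- `F` is weakly left admissible: the dual notion. -/
def IsWeaklyLeftAdmissible (S : ExactStructure E) (F : Set E) : Prop :=
  ExtClosed S F ∧
  ∀ X : E, ∃ (F' : E) (η : X ⟶ F'), F' ∈ F ∧ S.IsDeflation η ∧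
    ∀ W : E, W ∈ F → ∀ f : X ⟶ W, ∃! g : F' ⟶ W, η ≫ g = f

/-- `(T, F)` is a torsion pair: `Hom(T,F) = 0` and every object fits into a conflation
with torsion part in `T` and torsion-free part in `F`. -/
def IsTorsionPair (S : ExactStructure E) (T F : Set E) : Prop :=
  (∀ t ∈ T, ∀ f ∈ F, ∀ g : t ⟶ f, g = 0) ∧
  ∀ X : E, ∃ (t f : E) (i : t ⟶ X) (d : X ⟶ f), t ∈ T ∧ f ∈ F ∧ S.conf i d

/-- The right perpendicular subcategory `T^⊥` (Hom and Ext¹ vanishing; Ext¹-vanishing is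
expressed by the splitting of all conflations `X → M → t` with `t ∈ T`). -/
def rightPerp (S : ExactStructure E) (T : Set E) : Set E :=
  {X | ∀ t ∈ T, (∀ f : t ⟶ X, f = 0) ∧
    ∀ (M : E) (i : X ⟶ M) (d : M ⟶ t), S.conf i d → ∃ r : M ⟶ X, i ≫ r = 𝟙 X}

/-- A torsion pair `(T,F)` is perpendicular if moreover `Ext¹(T,F) = 0`, i.e. every
conflation `f' → X → t` with `f' ∈ F`, `t ∈ T` splits. -/
def IsPerpTorsionPair (S : ExactStructure E) (T F : Set E) : Prop :=
  IsTorsionPair S T F ∧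
  ∀ {f' X t : E} (i : f' ⟶ X) (d : X ⟶ t), S.conf i d → f' ∈ F → t ∈ T →
    ∃ r : X ⟶ f', i ≫ r = 𝟙 f'


section Tools

variable {S : ExactStructure E}

/-- Inflations are monomorphisms. -/
lemma mono_of_conf {X Y Z : E} {i : X ⟶ Y} {d : Y ⟶ Z} (h : S.conf i d) : Mono i := by
  constructor
  intro W a b hab
  have h0 : (a ≫ i) ≫ d = 0 := by rw [Category.assoc, S.comp_zero h, comp_zero]
  obtain ⟨g, -, huniq⟩ := S.is_kernel h (a ≫ i) h0
  rw [huniq a rfl, huniq b hab.symm]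

/-- Deflations are epimorphisms. -/
lemma epi_of_conf {X Y Z : E} {i : X ⟶ Y} {d : Y ⟶ Z} (h : S.conf i d) : Epi d := by
  constructor
  intro W a b hab
  have h0 : i ≫ (d ≫ a) = 0 := by
    rw [← Category.assoc, S.comp_zero h, zero_comp]
  obtain ⟨g, -, huniq⟩ := S.is_cokernel h (d ≫ a) h0
  rw [huniq a rfl, huniq b hab.symm]

/-- Kernels are unique: if `(i, d)` is a kernel pair and `d` admits some conflation,
then `(i, d)` is a conflation. -/
lemma conf_of_kernel_pair {K X Y Z : E} {κ : K ⟶ Y} {d : Y ⟶ Z} (h : S.conf κ d)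
    {i : X ⟶ Y} (hi0 : i ≫ d = 0)
    (huniv : ∀ {W : E} (f : W ⟶ Y), f ≫ d = 0 → ∃! g : W ⟶ X, g ≫ i = f) :
    S.conf i d := by
  have hmono_i : Mono i := by
    constructor
    intro W a b hab
    obtain ⟨g, -, huniq⟩ := huniv (a ≫ i) (by rw [Category.assoc, hi0, comp_zero])
    rw [huniq a rfl, huniq b hab.symm]
  have hmono_κ : Mono κ := mono_of_conf h
  obtain ⟨v, hv, -⟩ := S.is_kernel h i hi0
  obtain ⟨w, hw, -⟩ := huniv κ (S.comp_zero h)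
  have hvw : v ≫ w = 𝟙 X := by
    have : (v ≫ w) ≫ i = 𝟙 X ≫ i := by rw [Category.assoc, hw, hv, Category.id_comp]
    exact hmono_i.right_cancellation _ _ this
  have hwv : w ≫ v = 𝟙 K := by
    have : (w ≫ v) ≫ κ = 𝟙 K ≫ κ := by rw [Category.assoc, hv, hw, Category.id_comp]
    exact hmono_κ.right_cancellation _ _ this
  have := S.conf_iso (Iso.mk w v hwv hvw) (Iso.refl Y) (Iso.refl Z) h
  simpa [hv] using this

/-- Cokernels are unique. -/
lemma conf_of_cokernel_pair {X Y Z Z' : E} {i : X ⟶ Y} {δ : Y ⟶ Z'} (h : S.conf i δ)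
    {d : Y ⟶ Z} (hd0 : i ≫ d = 0)
    (huniv : ∀ {W : E} (f : Y ⟶ W), i ≫ f = 0 → ∃! g : Z ⟶ W, d ≫ g = f) :
    S.conf i d := by
  have hepi_d : Epi d := by
    constructor
    intro W a b hab
    obtain ⟨g, -, huniq⟩ := huniv (d ≫ a) (by rw [← Category.assoc, hd0, zero_comp])
    rw [huniq a rfl, huniq b hab.symm]
  have hepi_δ : Epi δ := epi_of_conf h
  obtain ⟨v, hv, -⟩ := huniv δ (S.comp_zero h)
  obtain ⟨w, hw, -⟩ := S.is_cokernel h d hd0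
  have hwv : w ≫ v = 𝟙 Z' := by
    have : δ ≫ (w ≫ v) = δ ≫ 𝟙 Z' := by
      rw [← Category.assoc, hw, hv, Category.comp_id]
    exact hepi_δ.left_cancellation _ _ this
  have hvw : v ≫ w = 𝟙 Z := by
    have : d ≫ (v ≫ w) = d ≫ 𝟙 Z := by
      rw [← Category.assoc, hv, hw, Category.comp_id]
    exact hepi_d.left_cancellation _ _ this
  have := S.conf_iso (Iso.refl X) (Iso.refl Y) (Iso.mk w v hwv hvw) h
  simpa [hw] using this

/-- Pushout of a conflation along an arbitrary morphism. -/
lemma conf_pushout {X Y Z W : E} {i : X ⟶ Y} {d : Y ⟶ Z} (h : S.conf i d) (f : X ⟶ W) :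
    ∃ (P : E) (g : Y ⟶ P) (j : W ⟶ P) (dbar : P ⟶ Z),
      IsPushout i f g j ∧ S.conf j dbar ∧ g ≫ dbar = d ∧ j ≫ dbar = 0 := by
  obtain ⟨P, j, g, hPO, Z', d', hconf'⟩ := S.pushout_infl i f ⟨Z, d, h⟩
  have hw : i ≫ d = f ≫ (0 : W ⟶ Z) := by rw [S.comp_zero h, comp_zero]
  set dbar := hPO.desc d 0 hw with hdbar
  have hg : g ≫ dbar = d := hPO.inl_desc d 0 hw
  have hj : j ≫ dbar = 0 := hPO.inr_desc d 0 hw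
  refine ⟨P, g, j, dbar, hPO, ?_, hg, hj⟩
  refine conf_of_cokernel_pair hconf' hj ?_
  intro W' φ hφ
  have h0 : i ≫ (g ≫ φ) = 0 := by
    rw [← Category.assoc, hPO.w, Category.assoc, hφ, comp_zero]
  obtain ⟨t, ht, htuniq⟩ := S.is_cokernel h (g ≫ φ) h0
  have hepi : Epi d := epi_of_conf h
  refine ⟨t, ?_, ?_⟩
  · apply hPO.hom_ext
    · rw [← Category.assoc, hg, ht]
    · rw [← Category.assoc, hj, zero_comp, hφ]
  · intro t' ht'
    apply hepi.left_cancellation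
    rw [ht, ← hg, Category.assoc, ht']

/-- Deflations are stable under arbitrary pullback squares, with the induced kernel. -/
lemma conf_of_isPullback {X Y Z W P : E} {i : X ⟶ Y} {d : Y ⟶ Z} (h : S.conf i d)
    {p₁ : P ⟶ Y} {p₂ : P ⟶ W} {f : W ⟶ Z} (sq : IsPullback p₁ p₂ d f) :
    ∃ ibar : X ⟶ P, ibar ≫ p₁ = i ∧ ibar ≫ p₂ = 0 ∧ S.conf ibar p₂ := by
  obtain ⟨P₀, q₁, q₂, sq₀, A, i₀, hconf₀⟩ := S.pullback_defl d f ⟨X, i, h⟩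
  -- transport the conflation structure on q₂ to p₂
  set e := sq.isoIsPullback _ _ sq₀ with he
  have he1 : e.hom ≫ q₁ = p₁ := IsPullback.isoIsPullback_hom_fst _ _ sq sq₀
  have he2 : e.hom ≫ q₂ = p₂ := IsPullback.isoIsPullback_hom_snd _ _ sq sq₀
  have hκ : S.conf (i₀ ≫ e.inv) p₂ := by
    have := S.conf_iso (Iso.refl A) e.symm (Iso.refl W) hconf₀
    simp only [Iso.refl_inv, Iso.refl_hom, Category.id_comp, Category.comp_id,
      Iso.symm_hom, Iso.symm_inv] at this
    rwa [he2] at this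
  have hw : i ≫ d = (0 : X ⟶ W) ≫ f := by rw [S.comp_zero h, zero_comp]
  set ibar := sq.lift i 0 hw with hibar
  have hi1 : ibar ≫ p₁ = i := sq.lift_fst i 0 hw
  have hi2 : ibar ≫ p₂ = 0 := sq.lift_snd i 0 hw
  refine ⟨ibar, hi1, hi2, conf_of_kernel_pair hκ hi2 ?_⟩
  intro W' φ hφ
  have h1 : (φ ≫ p₁) ≫ d = 0 := by
    rw [Category.assoc, sq.w, ← Category.assoc, hφ, zero_comp]
  obtain ⟨u, hu, huuniq⟩ := S.is_kernel h (φ ≫ p₁) h1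
  have hmono : Mono i := mono_of_conf h
  refine ⟨u, ?_, ?_⟩
  · apply sq.hom_ext
    · rw [Category.assoc, hi1, hu]
    · rw [Category.assoc, hi2, comp_zero, hφ]
  · intro u' hu'
    apply hmono.right_cancellation
    rw [← hi1]
    rw [← Category.assoc, hu', ← hu, hi1]

/-- Pullback of a conflation along an arbitrary morphism. -/
lemma conf_pullback {X Y Z W : E} {i : X ⟶ Y} {d : Y ⟶ Z} (h : S.conf i d) (f : W ⟶ Z) :
    ∃ (P : E) (p₁ : P ⟶ Y) (p₂ : P ⟶ W) (ibar : X ⟶ P),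
      IsPullback p₁ p₂ d f ∧ S.conf ibar p₂ ∧ ibar ≫ p₁ = i ∧ ibar ≫ p₂ = 0 := by
  obtain ⟨P₀, q₁, q₂, sq₀, A, i₀, hconf₀⟩ := S.pullback_defl d f ⟨X, i, h⟩
  obtain ⟨ibar, h1, h2, hc⟩ := conf_of_isPullback h sq₀
  exact ⟨P₀, q₁, q₂, ibar, sq₀, hc, h1, h2⟩

end Tools

section Split

variable {S : ExactStructure E} [HasBinaryBiproducts E]

/-- The split conflation `X → X ⊞ Y → Y`. -/
lemma conf_inl (X Y : E) : S.conf (biprod.inl : X ⟶ X ⊞ Y) (biprod.snd : X ⊞ Y ⟶ Y) := by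
  obtain ⟨P, g, j, dbar, hPO, hconf, hg, hj⟩ :=
    conf_pushout (S.conf_id Y) (0 : (0 : E) ⟶ X)
  have hw : (0 : (0:E) ⟶ Y) ≫ (biprod.inr : Y ⟶ X ⊞ Y) =
      (0 : (0:E) ⟶ X) ≫ (biprod.inl : X ⟶ X ⊞ Y) := by simp
  set φ : P ⟶ X ⊞ Y := hPO.desc biprod.inr biprod.inl hw with hφ
  have hgφ : g ≫ φ = biprod.inr := hPO.inl_desc _ _ hw
  have hjφ : j ≫ φ = biprod.inl := hPO.inr_desc _ _ hw
  set ψ : X ⊞ Y ⟶ P := biprod.desc j g with hψ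
  have hφψ : φ ≫ ψ = 𝟙 P := by
    apply hPO.hom_ext
    · rw [← Category.assoc, hgφ, Category.comp_id]; simp [hψ]
    · rw [← Category.assoc, hjφ, Category.comp_id]; simp [hψ]
  have hψφ : ψ ≫ φ = 𝟙 (X ⊞ Y) := by
    apply biprod.hom_ext' <;> rw [← Category.assoc] <;> simp [hψ, hgφ, hjφ]
  have htrans := S.conf_iso (Iso.refl X) (⟨φ, ψ, hφψ, hψφ⟩ : P ≅ X ⊞ Y) (Iso.refl Y) hconf
  simp only [Iso.refl_inv, Iso.refl_hom, Category.id_comp,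
    Category.comp_id] at htrans
  have h1 : j ≫ φ = biprod.inl := hjφ
  have h2 : ψ ≫ dbar = biprod.snd := by
    apply biprod.hom_ext'
    · rw [← Category.assoc]; simp [hψ, hj]
    · rw [← Category.assoc]; simp [hψ, hg]
  rwa [h1, h2] at htrans

/-- The split conflation `Y → X ⊞ Y → X`. -/
lemma conf_inr (X Y : E) : S.conf (biprod.inr : Y ⟶ X ⊞ Y) (biprod.fst : X ⊞ Y ⟶ X) := by
  obtain ⟨P, g, j, dbar, hPO, hconf, hg, hj⟩ :=
    conf_pushout (S.conf_id X) (0 : (0 : E) ⟶ Y)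
  have hw : (0 : (0:E) ⟶ X) ≫ (biprod.inl : X ⟶ X ⊞ Y) =
      (0 : (0:E) ⟶ Y) ≫ (biprod.inr : Y ⟶ X ⊞ Y) := by simp
  set φ : P ⟶ X ⊞ Y := hPO.desc biprod.inl biprod.inr hw with hφ
  have hgφ : g ≫ φ = biprod.inl := hPO.inl_desc _ _ hw
  have hjφ : j ≫ φ = biprod.inr := hPO.inr_desc _ _ hw
  set ψ : X ⊞ Y ⟶ P := biprod.desc g j with hψ
  have hφψ : φ ≫ ψ = 𝟙 P := by
    apply hPO.hom_ext
    · rw [← Category.assoc, hgφ, Category.comp_id]; simp [hψ]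
    · rw [← Category.assoc, hjφ, Category.comp_id]; simp [hψ]
  have hψφ : ψ ≫ φ = 𝟙 (X ⊞ Y) := by
    apply biprod.hom_ext' <;> rw [← Category.assoc] <;> simp [hψ, hgφ, hjφ]
  have htrans := S.conf_iso (Iso.refl Y) (⟨φ, ψ, hφψ, hψφ⟩ : P ≅ X ⊞ Y) (Iso.refl X) hconf
  simp only [Iso.refl_inv, Iso.refl_hom, Category.id_comp,
    Category.comp_id] at htrans
  have h2 : ψ ≫ dbar = biprod.fst := by
    apply biprod.hom_ext'
    · rw [← Category.assoc]; simp [hψ, hg]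
    · rw [← Category.assoc]; simp [hψ, hj]
  rwa [hjφ, h2] at htrans

/-- A section of a deflation is an inflation, with the complementary retraction
as its cokernel. -/
lemma conf_section {F Q Y : E} {ibar : F ⟶ Q} {p₂ : Q ⟶ Y} (h : S.conf ibar p₂)
    {σ : Y ⟶ Q} (hσ : σ ≫ p₂ = 𝟙 Y) :
    ∃ r : Q ⟶ F, S.conf σ r ∧ ibar ≫ r = 𝟙 F ∧ σ ≫ r = 0 ∧
      r ≫ ibar = 𝟙 Q - p₂ ≫ σ := by
  have hmono : Mono ibar := mono_of_conf h
  have h0 : (𝟙 Q - p₂ ≫ σ) ≫ p₂ = 0 := by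
    rw [Preadditive.sub_comp, Category.id_comp, Category.assoc, hσ, Category.comp_id, sub_self]
  obtain ⟨r, hr, -⟩ := S.is_kernel h (𝟙 Q - p₂ ≫ σ) h0
  have hir : ibar ≫ r = 𝟙 F := by
    apply hmono.right_cancellation
    rw [Category.assoc, hr, Category.id_comp, Preadditive.comp_sub, Category.comp_id,
      ← Category.assoc, S.comp_zero h, zero_comp, sub_zero]
  have hσr : σ ≫ r = 0 := by
    apply hmono.right_cancellation
    rw [Category.assoc, hr, zero_comp, Preadditive.comp_sub, Category.comp_id,
      ← Category.assoc, hσ, Category.id_comp, sub_self]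
  have hhom : (biprod.desc ibar σ : F ⊞ Y ⟶ Q) ≫ biprod.lift r p₂ = 𝟙 (F ⊞ Y) := by
    apply biprod.hom_ext' <;> apply biprod.hom_ext <;>
      simp [hir, hσr, hσ, S.comp_zero h]
  have hinv : (biprod.lift r p₂ : Q ⟶ F ⊞ Y) ≫ biprod.desc ibar σ = 𝟙 Q := by
    rw [biprod.lift_desc, hr]
    abel
  have htrans := S.conf_iso (Iso.refl Y)
    (⟨biprod.desc ibar σ, biprod.lift r p₂, hhom, hinv⟩ : F ⊞ Y ≅ Q) (Iso.refl F) (conf_inr F Y)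
  simp only [Iso.refl_inv, Iso.refl_hom, Category.id_comp, Category.comp_id] at htrans
  rw [biprod.inr_desc, biprod.lift_fst] at htrans
  exact ⟨r, htrans, hir, hσr, hr⟩

/-- A retraction of an inflation gives a splitting; the deflation acquires a section
forming a conflation with the retraction. -/
lemma conf_retraction {X Y Z : E} {i : X ⟶ Y} {d : Y ⟶ Z} (h : S.conf i d)
    {r : Y ⟶ X} (hr : i ≫ r = 𝟙 X) :
    ∃ s : Z ⟶ Y, S.conf s r ∧ s ≫ d = 𝟙 Z ∧ s ≫ r = 0 ∧ d ≫ s = 𝟙 Y - r ≫ i := by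
  have hepi : Epi d := epi_of_conf h
  have h0 : i ≫ (𝟙 Y - r ≫ i) = 0 := by
    rw [Preadditive.comp_sub, Category.comp_id, ← Category.assoc, hr, Category.id_comp, sub_self]
  obtain ⟨s, hs, -⟩ := S.is_cokernel h (𝟙 Y - r ≫ i) h0
  have hsd : s ≫ d = 𝟙 Z := by
    apply hepi.left_cancellation
    rw [← Category.assoc, hs, Category.comp_id, Preadditive.sub_comp, Category.id_comp,
      Category.assoc, S.comp_zero h, comp_zero, sub_zero]
  have hsr : s ≫ r = 0 := by
    apply hepi.left_cancellation
    rw [← Category.assoc, hs, comp_zero, Preadditive.sub_comp, Category.id_comp,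
      Category.assoc, hr, Category.comp_id, sub_self]
  have hhom : (biprod.lift r d : Y ⟶ X ⊞ Z) ≫ biprod.desc i s = 𝟙 Y := by
    rw [biprod.lift_desc, hs]
    abel
  have hinv : (biprod.desc i s : X ⊞ Z ⟶ Y) ≫ biprod.lift r d = 𝟙 (X ⊞ Z) := by
    apply biprod.hom_ext' <;> apply biprod.hom_ext <;>
      simp [hr, hsr, hsd, S.comp_zero h]
  have htrans := S.conf_iso (Iso.refl Z)
    (⟨biprod.desc i s, biprod.lift r d, hinv, hhom⟩ : X ⊞ Z ≅ Y) (Iso.refl X) (conf_inr X Z)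
  simp only [Iso.refl_inv, Iso.refl_hom, Category.id_comp, Category.comp_id] at htrans
  rw [biprod.inr_desc, biprod.lift_fst] at htrans
  exact ⟨s, htrans, hsd, hsr, hs⟩

/-- A conflation whose deflation has a section also splits on the kernel side. -/
lemma retraction_of_section {X Y Z : E} {i : X ⟶ Y} {d : Y ⟶ Z} (h : S.conf i d)
    {s : Z ⟶ Y} (hs : s ≫ d = 𝟙 Z) : ∃ r : Y ⟶ X, i ≫ r = 𝟙 X := by
  have hmono : Mono i := mono_of_conf h
  have h0 : (𝟙 Y - d ≫ s) ≫ d = 0 := by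
    rw [Preadditive.sub_comp, Category.id_comp, Category.assoc, hs, Category.comp_id, sub_self]
  obtain ⟨r, hr, -⟩ := S.is_kernel h (𝟙 Y - d ≫ s) h0
  refine ⟨r, ?_⟩
  apply hmono.right_cancellation
  rw [Category.assoc, hr, Category.id_comp, Preadditive.comp_sub, Category.comp_id,
    ← Category.assoc, S.comp_zero h, zero_comp, sub_zero]

end Split

section Comp

variable {S : ExactStructure E} [HasBinaryBiproducts E]

/-- The square expressing `𝟙 ⊞ b` as a pullback of `b`. -/
lemma isPullback_biprod_map {C B B'' : E} (b : B ⟶ B'') :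
    IsPullback (biprod.snd : C ⊞ B ⟶ B) (biprod.map (𝟙 C) b) b
      (biprod.snd : C ⊞ B'' ⟶ B'') := by
  have eq : (biprod.snd : C ⊞ B ⟶ B) ≫ b =
      biprod.map (𝟙 C) b ≫ (biprod.snd : C ⊞ B'' ⟶ B'') := by simp
  exact IsPullback.of_isLimit (PullbackCone.IsLimit.mk eq
    (fun s => biprod.lift (s.snd ≫ biprod.fst) s.fst)
    (fun s => by simp)
    (fun s => by
      apply biprod.hom_ext
      · simp
      · simp [s.condition])
    (fun s m hm1 hm2 => by
      apply biprod.hom_ext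
      · have := congrArg (· ≫ (biprod.fst : C ⊞ B'' ⟶ C)) hm2
        simpa using this
      · simpa using hm1))

/-- Keller's theorem: the composition of two inflations is an inflation; more precisely,
given conflations `(i, b)` and `(j, c)` and a pushout of `(j, c)` along `b`, the map
`g` of the pushout square forms a conflation with `i ≫ j`. -/
lemma conf_comp {A B B'' C C'' D : E} {i : A ⟶ B} {b : B ⟶ B''} (hib : S.conf i b)
    {j : B ⟶ C} {c : C ⟶ C''} (hjc : S.conf j c)
    {g : C ⟶ D} {jt : B'' ⟶ D} {dbar : D ⟶ C''}
    (hPO : IsPushout j b g jt) (hD : S.conf jt dbar) (hgd : g ≫ dbar = c) :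
    S.conf (i ≫ j) g := by
  obtain ⟨P, p₁, p₂, jhat, sqP, hjhatconf, hjhat1, hjhat2⟩ := conf_pullback hD c
  obtain ⟨β, hβp₂, hβp₁, hβconf⟩ := conf_of_isPullback hjc sqP.flip
  have hmono_jhat : Mono jhat := mono_of_conf hjhatconf
  have hw_lam : g ≫ dbar = 𝟙 C ≫ c := by rw [Category.id_comp, hgd]
  set lam := sqP.lift g (𝟙 C) hw_lam with hlamdef
  have hlam1 : lam ≫ p₁ = g := sqP.lift_fst _ _ _
  have hlam2 : lam ≫ p₂ = 𝟙 C := sqP.lift_snd _ _ _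
  obtain ⟨r, -, hjr, hlamr, hrj⟩ := conf_section hjhatconf hlam2
  have hβr : β ≫ r = -b := by
    apply hmono_jhat.right_cancellation
    have hlhs : (β ≫ r) ≫ jhat = β - j ≫ lam := by
      rw [Category.assoc, hrj, Preadditive.comp_sub, Category.comp_id, ← Category.assoc, hβp₂]
    rw [hlhs]
    apply sqP.hom_ext
    · simp only [Preadditive.sub_comp, Preadditive.neg_comp, Category.assoc,
        hβp₁, hlam1, hjhat1, hPO.w, zero_sub]
    · simp only [Preadditive.sub_comp, Preadditive.neg_comp, Category.assoc,
        hβp₂, hlam2, hjhat2, Category.comp_id, sub_self, comp_zero, neg_zero]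
  -- the deflation `(g, jt) : C ⊞ B'' ⟶ D` with kernel `(j, -b)`
  have hhom : (biprod.lift p₂ r : P ⟶ C ⊞ B'') ≫ biprod.desc lam jhat = 𝟙 P := by
    rw [biprod.lift_desc, hrj]; abel
  have hinv : (biprod.desc lam jhat : C ⊞ B'' ⟶ P) ≫ biprod.lift p₂ r = 𝟙 (C ⊞ B'') := by
    apply biprod.hom_ext' <;> apply biprod.hom_ext <;>
      simp [hlam2, hlamr, hjr, hjhat2]
  have htransG := S.conf_iso (Iso.refl B)
    (⟨biprod.lift p₂ r, biprod.desc lam jhat, hhom, hinv⟩ : P ≅ C ⊞ B'')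
    (Iso.refl D) hβconf
  simp only [Iso.refl_inv, Iso.refl_hom, Category.id_comp, Category.comp_id] at htransG
  have hβlift : β ≫ biprod.lift p₂ r = biprod.lift j (-b) := by
    apply biprod.hom_ext <;> simp [hβp₂, hβr]
  have hdescp : (biprod.desc lam jhat : C ⊞ B'' ⟶ P) ≫ p₁ = biprod.desc g jt := by
    apply biprod.hom_ext' <;> simp [hlam1, hjhat1]
  rw [hβlift, hdescp] at htransG
  -- the deflation `𝟙 ⊞ b` with kernel `(0, i)`
  obtain ⟨χ, hχ1, hχ2, hχconf⟩ := conf_of_isPullback hib (isPullback_biprod_map (C := C) b)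
  have hχ : χ = biprod.lift 0 i := by
    apply biprod.hom_ext
    · have := congrArg (· ≫ (biprod.fst : C ⊞ B'' ⟶ C)) hχ2
      simpa using this
    · simpa using hχ1
  rw [hχ] at hχconf
  -- the composed deflation
  obtain ⟨K, κ, hκ⟩ := S.defl_comp ⟨A, _, hχconf⟩ ⟨B, _, htransG⟩
  have hHG : (biprod.map (𝟙 C) b) ≫ (biprod.desc g jt) = biprod.desc g (b ≫ jt) := by
    apply biprod.hom_ext' <;> simp
  rw [hHG] at hκ
  -- the kernel of the composed deflation
  set μ : A ⊞ B ⟶ C ⊞ B := biprod.desc (biprod.lift (i ≫ j) 0) (biprod.lift (-j) (𝟙 B))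
    with hμdef
  have hmono_i : Mono i := mono_of_conf hib
  have hmono_j : Mono j := mono_of_conf hjc
  have hmono_ij : Mono (i ≫ j) := mono_comp i j
  have hz1 : (biprod.lift (i ≫ j) 0 : A ⟶ C ⊞ B) ≫ biprod.desc g (b ≫ jt) = 0 := by
    rw [biprod.lift_desc, zero_comp, add_zero, Category.assoc, hPO.w, ← Category.assoc,
      S.comp_zero hib, zero_comp]
  have hz2 : (biprod.lift (-j) (𝟙 B) : B ⟶ C ⊞ B) ≫ biprod.desc g (b ≫ jt) = 0 := by
    rw [biprod.lift_desc, Preadditive.neg_comp, Category.id_comp, hPO.w, neg_add_cancel]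
  have hμΔ : μ ≫ biprod.desc g (b ≫ jt) = 0 := by
    rw [hμdef]
    apply biprod.hom_ext'
    · rw [← Category.assoc, biprod.inl_desc, hz1, comp_zero]
    · rw [← Category.assoc, biprod.inr_desc, hz2, comp_zero]
  have hconfμ : S.conf μ (biprod.desc g (b ≫ jt)) := by
    refine conf_of_kernel_pair hκ hμΔ ?_
    intro W' f' hf'
    have hfH : (biprod.lift (f' ≫ biprod.fst) ((f' ≫ biprod.snd) ≫ b) : W' ⟶ C ⊞ B'') ≫
        biprod.desc g jt = 0 := by
      rw [biprod.lift_desc, Category.assoc, ← hf']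
      conv_rhs => rw [show f' = biprod.lift (f' ≫ biprod.fst) (f' ≫ biprod.snd) by
        apply biprod.hom_ext <;> simp]
      rw [biprod.lift_desc]
      simp [Category.assoc]
    obtain ⟨w, hw, -⟩ := S.is_kernel htransG _ hfH
    have hwj : w ≫ j = f' ≫ biprod.fst := by
      have := congrArg (· ≫ (biprod.fst : C ⊞ B'' ⟶ C)) hw
      simpa using this
    have hwb : (w + f' ≫ biprod.snd) ≫ b = 0 := by
      have h2 := congrArg (· ≫ (biprod.snd : C ⊞ B'' ⟶ B'')) hw
      simp only [Category.assoc, biprod.lift_snd, Preadditive.comp_neg] at h2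
      rw [Preadditive.add_comp, Category.assoc, ← h2, add_neg_cancel]
    obtain ⟨v, hv, -⟩ := S.is_kernel hib _ hwb
    refine ⟨biprod.lift v (f' ≫ biprod.snd), ?_, ?_⟩
    · show biprod.lift v (f' ≫ biprod.snd) ≫ μ = f'
      rw [hμdef, biprod.lift_desc]
      apply biprod.hom_ext
      · simp only [Preadditive.add_comp, Category.assoc, biprod.lift_fst, Preadditive.comp_neg]
        rw [← Category.assoc v i j, hv, Preadditive.add_comp, hwj, Category.assoc]
        abel
      · simp
    · intro u' hu'
      have hμsnd : μ ≫ (biprod.snd : C ⊞ B ⟶ B) = biprod.snd := by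
        rw [hμdef]; apply biprod.hom_ext' <;> simp
      have hμfst : μ ≫ (biprod.fst : C ⊞ B ⟶ C) = biprod.desc (i ≫ j) (-j) := by
        rw [hμdef]; apply biprod.hom_ext' <;> simp
      have hu'snd : u' ≫ biprod.snd = f' ≫ biprod.snd := by
        have h3 := congrArg (· ≫ (biprod.snd : C ⊞ B ⟶ B)) hu'
        rwa [Category.assoc, hμsnd] at h3
      have hu'fst : (u' ≫ biprod.fst) ≫ (i ≫ j) = v ≫ (i ≫ j) := by
        have h4 := congrArg (· ≫ (biprod.fst : C ⊞ B ⟶ C)) hu'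
        rw [Category.assoc, hμfst] at h4
        have h5 : u' ≫ biprod.desc (i ≫ j) (-j) =
            (u' ≫ biprod.fst) ≫ (i ≫ j) + (u' ≫ biprod.snd) ≫ (-j) := by
          conv_lhs => rw [show u' = biprod.lift (u' ≫ biprod.fst) (u' ≫ biprod.snd) by
            apply biprod.hom_ext <;> simp]
          rw [biprod.lift_desc]
        rw [h5, hu'snd] at h4
        have h6 : v ≫ (i ≫ j) = (f' ≫ biprod.fst) + (f' ≫ biprod.snd) ≫ j := by
          rw [← Category.assoc, hv, Preadditive.add_comp, hwj]
        rw [h6, ← h4]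
        simp only [Preadditive.comp_neg]
        abel
      apply biprod.hom_ext
      · have h10 : u' ≫ biprod.fst = v := hmono_ij.right_cancellation _ _ hu'fst
        rw [h10, biprod.lift_fst]
      · rw [hu'snd, biprod.lift_snd]
  -- push out along the projection and identify with `C`
  obtain ⟨Pst, gst, jst, dst, hPOst, hjstconf, hgst, -⟩ :=
    conf_pushout hconfμ (biprod.fst : A ⊞ B ⟶ A)
  have hwφ : μ ≫ biprod.desc (𝟙 C) j = biprod.fst ≫ (i ≫ j) := by
    rw [hμdef]
    apply biprod.hom_ext' <;> simp [biprod.lift_desc]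
  set φ := hPOst.desc (biprod.desc (𝟙 C) j) (i ≫ j) hwφ with hφdef
  have hφ1 : gst ≫ φ = biprod.desc (𝟙 C) j := hPOst.inl_desc _ _ _
  have hφ2 : jst ≫ φ = i ≫ j := hPOst.inr_desc _ _ _
  have hdec : 𝟙 (C ⊞ B) - biprod.desc (𝟙 C) j ≫ biprod.inl =
      biprod.snd ≫ biprod.inr ≫ μ := by
    rw [hμdef]
    apply biprod.hom_ext' <;> apply biprod.hom_ext <;> simp
  have hkey : (biprod.desc (𝟙 C) j ≫ biprod.inl) ≫ gst = gst := by
    have h7 : (𝟙 (C ⊞ B) - biprod.desc (𝟙 C) j ≫ biprod.inl) ≫ gst = 0 := by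
      rw [hdec, Category.assoc, Category.assoc, hPOst.w]
      simp
    rw [Preadditive.sub_comp, Category.id_comp, sub_eq_zero] at h7
    exact h7.symm
  have hφψ : φ ≫ (biprod.inl ≫ gst) = 𝟙 Pst := by
    apply hPOst.hom_ext
    · rw [Category.comp_id, ← Category.assoc, hφ1, ← Category.assoc, hkey]
    · rw [Category.comp_id, ← Category.assoc, hφ2]
      have h8 : (i ≫ j) ≫ (biprod.inl : C ⟶ C ⊞ B) = (biprod.inl : A ⟶ A ⊞ B) ≫ μ := by
        rw [hμdef]; apply biprod.hom_ext <;> simp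
      rw [← Category.assoc, h8, Category.assoc, hPOst.w, ← Category.assoc]
      simp
  have hψφ : (biprod.inl ≫ gst) ≫ φ = 𝟙 C := by
    rw [Category.assoc, hφ1, biprod.inl_desc]
  have hfinal := S.conf_iso (Iso.refl A)
    (⟨φ, biprod.inl ≫ gst, hφψ, hψφ⟩ : Pst ≅ C) (Iso.refl D) hjstconf
  simp only [Iso.refl_inv, Iso.refl_hom, Category.id_comp, Category.comp_id] at hfinal
  rw [hφ2] at hfinal
  have h9 : (biprod.inl ≫ gst) ≫ dst = g := by
    rw [Category.assoc, hgst, biprod.inl_desc]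
  rwa [h9] at hfinal

/-- The pullback of a conflation's inflation along a further deflation, composed:
`v₁` is an inflation with cokernel `e ≫ p`. -/
lemma conf_pullback_comp {A W R T' Q V : E} {a : A ⟶ W} {e : W ⟶ R} (hae : S.conf a e)
    {u : T' ⟶ R} {p : R ⟶ Q} (hup : S.conf u p)
    {v₁ : V ⟶ W} {v₂ : V ⟶ T'} (sq : IsPullback v₁ v₂ e u) :
    S.conf v₁ (e ≫ p) := by
  obtain ⟨K, κ, hκ⟩ := S.defl_comp ⟨A, a, hae⟩ ⟨T', u, hup⟩
  have h0 : v₁ ≫ e ≫ p = 0 := by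
    rw [← Category.assoc, sq.w, Category.assoc, S.comp_zero hup, comp_zero]
  refine conf_of_kernel_pair hκ h0 ?_
  intro W' f' hf'
  obtain ⟨w, hw, -⟩ := S.is_kernel hup (f' ≫ e) (by rw [Category.assoc]; exact hf')
  have hmono_u : Mono u := mono_of_conf hup
  refine ⟨sq.lift f' w hw.symm, sq.lift_fst _ _ _, ?_⟩
  intro z' hz'
  apply sq.hom_ext
  · rw [sq.lift_fst, hz']
  · rw [sq.lift_snd]
    apply hmono_u.right_cancellation
    rw [hw, ← hz', Category.assoc, Category.assoc, sq.w]

end Comp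

section Chases

variable {S : ExactStructure E} [HasBinaryBiproducts E]

/-- If the kernel `X` of a conflation `X → Y → Z` is filtered by `A` and `B` such that
all conflations `A → M → Z` split and all conflations `B → M → Z` split, then the
conflation splits. -/
lemma split_of_filtration {A X B Z : E} {α : A ⟶ X} {β : X ⟶ B} (hαβ : S.conf α β)
    (hypA : ∀ {M : E} (iA : A ⟶ M) (dA : M ⟶ Z), S.conf iA dA → ∃ s : Z ⟶ M, s ≫ dA = 𝟙 Z)
    (hypB : ∀ {M : E} (iB : B ⟶ M) (dB : M ⟶ Z), S.conf iB dB → ∃ r : M ⟶ B, iB ≫ r = 𝟙 B)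
    {Y : E} {i : X ⟶ Y} {d : Y ⟶ Z} (h : S.conf i d) : ∃ s : Z ⟶ Y, s ≫ d = 𝟙 Z := by
  obtain ⟨P, g, jt, dbar, hPO, hconfP, hgd, -⟩ := conf_pushout h β
  have hαig : S.conf (α ≫ i) g := conf_comp hαβ h hPO hconfP hgd
  obtain ⟨rP, hrP⟩ := hypB jt dbar hconfP
  obtain ⟨sP, -, hsP, -, -⟩ := conf_retraction hconfP hrP
  obtain ⟨Z₃, z₁, z₂, abar, sq3, hconf3, -, -⟩ := conf_pullback hαig sP
  obtain ⟨τ, hτ⟩ := hypA abar z₂ hconf3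
  refine ⟨τ ≫ z₁, ?_⟩
  calc (τ ≫ z₁) ≫ d = τ ≫ z₁ ≫ g ≫ dbar := by rw [hgd, Category.assoc]
    _ = τ ≫ (z₁ ≫ g) ≫ dbar := by rw [Category.assoc]
    _ = τ ≫ (z₂ ≫ sP) ≫ dbar := by rw [sq3.w]
    _ = (τ ≫ z₂) ≫ (sP ≫ dbar) := by simp only [Category.assoc]
    _ = 𝟙 Z := by rw [hτ, hsP, Category.id_comp]

variable [HasFiniteBiproducts E]

/-- If all conflations `T₀ → M → Z` split, then so do conflations `X → M → Z` for any
finite direct sum `X` of copies of `T₀` (retraction form). -/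
lemma split_sum_kernel {T₀ : E} {n : ℕ} {X Z : E} (e : X ≅ ⨁ (fun _ : Fin n => T₀))
    (hyp : ∀ {M : E} (i0 : T₀ ⟶ M) (d0 : M ⟶ Z), S.conf i0 d0 → ∃ r : M ⟶ T₀, i0 ≫ r = 𝟙 T₀)
    {Y : E} {i : X ⟶ Y} {d : Y ⟶ Z} (h : S.conf i d) : ∃ r : Y ⟶ X, i ≫ r = 𝟙 X := by
  have h1 : S.conf (e.inv ≫ i) d := by
    have := S.conf_iso e (Iso.refl Y) (Iso.refl Z) h
    simpa using this
  have hexists : ∀ jx : Fin n, ∃ ρ : Y ⟶ T₀,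
      (e.inv ≫ i) ≫ ρ = biproduct.π (fun _ : Fin n => T₀) jx := by
    intro jx
    obtain ⟨P, g, j', dbar, hPO, hconfP, -, -⟩ :=
      conf_pushout h1 (biproduct.π (fun _ : Fin n => T₀) jx)
    obtain ⟨rj, hrj⟩ := hyp j' dbar hconfP
    refine ⟨g ≫ rj, ?_⟩
    rw [← Category.assoc, hPO.w, Category.assoc, hrj, Category.comp_id]
  choose ρ hρ using hexists
  have hri : (e.inv ≫ i) ≫ biproduct.lift ρ = 𝟙 (⨁ (fun _ : Fin n => T₀)) := by
    apply biproduct.hom_ext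
    intro jx
    rw [Category.assoc, biproduct.lift_π, hρ, Category.id_comp]
  refine ⟨biproduct.lift ρ ≫ e.inv, ?_⟩
  have hi : i = e.hom ≫ (e.inv ≫ i) := by rw [← Category.assoc, e.hom_inv_id, Category.id_comp]
  rw [hi, Category.assoc, ← Category.assoc (e.inv ≫ i), hri, Category.id_comp, e.hom_inv_id]

/-- If all conflations `X → M → T₀` split, then so do conflations `X → M → t` for any
finite direct sum `t` of copies of `T₀` (section form). -/
lemma split_sum_quotient {T₀ : E} {m : ℕ} {t X : E} (e : t ≅ ⨁ (fun _ : Fin m => T₀))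
    (hyp : ∀ {M : E} (i0 : X ⟶ M) (d0 : M ⟶ T₀), S.conf i0 d0 → ∃ s : T₀ ⟶ M, s ≫ d0 = 𝟙 T₀)
    {Y : E} {i : X ⟶ Y} {d : Y ⟶ t} (h : S.conf i d) : ∃ s : t ⟶ Y, s ≫ d = 𝟙 t := by
  have h1 : S.conf i (d ≫ e.hom) := by
    have := S.conf_iso (Iso.refl X) (Iso.refl Y) e h
    simpa using this
  have hexists : ∀ jx : Fin m, ∃ σ : T₀ ⟶ Y,
      σ ≫ (d ≫ e.hom) = biproduct.ι (fun _ : Fin m => T₀) jx := by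
    intro jx
    obtain ⟨P, p₁, p₂, ibar, sq, hconfP, -, -⟩ :=
      conf_pullback h1 (biproduct.ι (fun _ : Fin m => T₀) jx)
    obtain ⟨sj, hsj⟩ := hyp ibar p₂ hconfP
    refine ⟨sj ≫ p₁, ?_⟩
    rw [Category.assoc, sq.w, ← Category.assoc, hsj, Category.id_comp]
  choose σ hσ using hexists
  have hsd : biproduct.desc σ ≫ (d ≫ e.hom) = 𝟙 (⨁ (fun _ : Fin m => T₀)) := by
    apply biproduct.hom_ext'
    intro jx
    rw [← Category.assoc, biproduct.ι_desc, hσ, Category.comp_id]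
  refine ⟨e.hom ≫ biproduct.desc σ, ?_⟩
  have : biproduct.desc σ ≫ d = e.inv := by
    have h2 := congrArg (· ≫ e.inv) hsd
    rwa [Category.assoc, Category.assoc, e.hom_inv_id, Category.comp_id, Category.id_comp] at h2
  rw [Category.assoc, this, e.hom_inv_id]

end Chases

section Irreducible

/-- Splitting of self-extensions of the irreducible object `T₀`. -/
lemma split_T0 {k : Type*} [Field k] [CategoryTheory.Linear k E] [HasFiniteBiproducts E]
    {S : ExactStructure E} {T₀ : E}
    (hEnd : ∀ f : T₀ ⟶ T₀, ∃ c : k, f = c • 𝟙 T₀)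
    {n : ℕ} {M : E} (e : M ≅ ⨁ (fun _ : Fin n => T₀))
    {i : T₀ ⟶ M} {d : M ⟶ T₀} (h : S.conf i d) : ∃ r : M ⟶ T₀, i ≫ r = 𝟙 T₀ := by
  classical
  set i' : T₀ ⟶ ⨁ (fun _ : Fin n => T₀) := i ≫ e.hom with hi'
  have hmono : Mono i' := by
    haveI : Mono i := mono_of_conf h
    rw [hi']
    exact mono_comp i e.hom
  choose c hc using fun jx => hEnd (i' ≫ biproduct.π (fun _ : Fin n => T₀) jx)
  by_cases hall : ∀ jx, c jx = 0
  · have hi'0 : i' = 0 := by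
      have htot : i' ≫ (𝟙 (⨁ (fun _ : Fin n => T₀))) = i' := Category.comp_id i'
      rw [← biproduct.total, Preadditive.comp_sum] at htot
      rw [← htot]
      apply Finset.sum_eq_zero
      intro jx _
      rw [← Category.assoc, hc jx, hall jx, zero_smul, zero_comp]
    have hid0 : 𝟙 T₀ = 0 := by
      have h1 : (𝟙 T₀) ≫ i' = (0 : T₀ ⟶ T₀) ≫ i' := by
        rw [Category.id_comp, hi'0, zero_comp]
      exact hmono.right_cancellation _ _ h1
    exact ⟨0, by rw [comp_zero, hid0]⟩
  · push_neg at hall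
    obtain ⟨jx, hjx⟩ := hall
    refine ⟨e.hom ≫ ((c jx)⁻¹ • biproduct.π (fun _ : Fin n => T₀) jx), ?_⟩
    rw [← Category.assoc, ← hi', Linear.comp_smul, hc jx, smul_smul,
      inv_mul_cancel₀ hjx, one_smul]

end Irreducible

/-- Let `T ≃ k-vect` be a right admissible subcategory of a `k`-linear
`Ext¹`-finite exact category `E`, with irreducible object `T₀` (every object of `T` is a
finite direct sum of copies of `T₀` and `End(T₀) = k`), and let `Q` be a projective object
of the perpendicular exact category `T^⊥`.  Then the universal extension `R` of `Q` by
`T₀` — i.e. the middle term of a conflation `T' → R → Q` with `T' ∈ T` for which the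
connecting map `Hom(T', T₀) → Ext¹(Q, T₀)`, `φ ↦ φ_*[conflation]`, is bijective (this is
exactly the conflation `T₀ ⊗ Ext¹(Q,T₀)^∨ → R → Q` classified by the canonical class;
surjectivity says every extension of `Q` by `T₀` is a pushout of the given one, and
injectivity says that a `φ` whose pushout splits, i.e. which extends over `u`, is zero) —
is a projective object of `E`, and `T₀` itself is projective in `E`. -/
theorem universal_extension_projective
    (k : Type*) [Field k] [CategoryTheory.Linear k E] [HasFiniteBiproducts E]
    (S : ExactStructure E) (T : Set E)
    (hText : ExtClosed S T)
    -- `T` is right admissible: `(T, T^⊥)` is a (perpendicular) torsion pair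
    (hadm : IsTorsionPair S T (rightPerp S T))
    -- `T ≃ k`-vect with irreducible object `T₀`
    (T₀ : E) (hT₀ : T₀ ∈ T)
    (hTgen : ∀ t ∈ T, ∃ n : ℕ, Nonempty (t ≅ ⨁ (fun _ : Fin n => T₀)))
    (hEnd : ∀ f : T₀ ⟶ T₀, ∃ c : k, f = c • 𝟙 T₀)
    -- `Q` is a projective object of the exact category `T^⊥`
    (Q : E) (hQ : Q ∈ rightPerp S T)
    (hQproj : ∀ {Y Z : E}, Y ∈ rightPerp S T → Z ∈ rightPerp S T →
      ∀ (d : Y ⟶ Z), S.IsDeflation d → ∀ f : Q ⟶ Z, ∃ g : Q ⟶ Y, g ≫ d = f)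
    -- the universal extension `T' → R → Q` of `Q` by `T₀`
    (T' R : E) (hT' : T' ∈ T) (u : T' ⟶ R) (p : R ⟶ Q) (hconf : S.conf u p)
    (hsurj : ∀ {M : E} (j : T₀ ⟶ M) (q : M ⟶ Q), S.conf j q →
      ∃ (φ : T' ⟶ T₀) (m : R ⟶ M), u ≫ m = φ ≫ j ∧ m ≫ q = p)
    (hinj : ∀ φ : T' ⟶ T₀, (∃ ρ : R ⟶ T₀, u ≫ ρ = φ) → φ = 0) :
    (∀ {Y Z : E} (d : Y ⟶ Z), S.IsDeflation d → ∀ f : R ⟶ Z, ∃ g : R ⟶ Y, g ≫ d = f) ∧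
    (∀ {Y Z : E} (d : Y ⟶ Z), S.IsDeflation d → ∀ f : T₀ ⟶ Z, ∃ g : T₀ ⟶ Y, g ≫ d = f) := by
  classical
  haveI : HasBinaryBiproducts E := hasBinaryBiproducts_of_finite_biproducts E
  obtain ⟨hhom0, hdecomp⟩ := hadm
  -- step 1: conflations `T₀ → M → T₀` split
  have M1 : ∀ {M : E} (i : T₀ ⟶ M) (d : M ⟶ T₀), S.conf i d →
      ∃ r : M ⟶ T₀, i ≫ r = 𝟙 T₀ := by
    intro M i d hid
    have hM : M ∈ T := hText hid hT₀ hT₀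
    obtain ⟨n, ⟨e⟩⟩ := hTgen M hM
    exact split_T0 (k := k) hEnd e hid
  -- step 2: conflations `X → M → T₀` with `X ∈ T` split (retraction form)
  have M2 : ∀ {X M : E}, X ∈ T → ∀ (i : X ⟶ M) (d : M ⟶ T₀), S.conf i d →
      ∃ r : M ⟶ X, i ≫ r = 𝟙 X := by
    intro X M hX i d hid
    obtain ⟨n, ⟨e⟩⟩ := hTgen X hX
    exact split_sum_kernel e (fun i0 d0 hc => M1 i0 d0 hc) hid
  have M2s : ∀ {X M : E}, X ∈ T → ∀ (i : X ⟶ M) (d : M ⟶ T₀), S.conf i d →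
      ∃ s : T₀ ⟶ M, s ≫ d = 𝟙 T₀ := by
    intro X M hX i d hid
    obtain ⟨r, hr⟩ := M2 hX i d hid
    obtain ⟨s, -, hs, -, -⟩ := conf_retraction hid hr
    exact ⟨s, hs⟩
  -- step 3: conflations `X → M → t` with `X, t ∈ T` split (section form)
  have M3 : ∀ {X M t : E}, X ∈ T → t ∈ T → ∀ (i : X ⟶ M) (d : M ⟶ t), S.conf i d →
      ∃ s : t ⟶ M, s ≫ d = 𝟙 t := by
    intro X M t hX ht i d hid
    obtain ⟨m, ⟨e⟩⟩ := hTgen t ht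
    exact split_sum_quotient e (fun i0 d0 hc => M2s hX i0 d0 hc) hid
  -- step 4: any conflation `X → Y → t` with `t ∈ T` splits
  have M4 : ∀ {X Y t : E}, t ∈ T → ∀ (i : X ⟶ Y) (d : Y ⟶ t), S.conf i d →
      ∃ s : t ⟶ Y, s ≫ d = 𝟙 t := by
    intro X Y t ht i d hid
    obtain ⟨tX, fX, jX, qX, htX, hfX, hconfX⟩ := hdecomp X
    exact split_of_filtration hconfX
      (fun iA dA hc => M3 htX ht iA dA hc)
      (fun iB dB hc => (hfX t ht).2 _ iB dB hc)
      hid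
  -- step 5: conflations `T₀ → W → R` split
  have M6a : ∀ {W : E} (a : T₀ ⟶ W) (e : W ⟶ R), S.conf a e →
      ∃ s : R ⟶ W, s ≫ e = 𝟙 R := by
    intro W a e hae
    obtain ⟨V, v₁, v₂, abar, sqV, hconfV, habar1, -⟩ := conf_pullback hae u
    have hfactG : S.conf v₁ (e ≫ p) := conf_pullback_comp hae hconf sqV
    obtain ⟨σV, hσV⟩ := M3 hT₀ hT' abar v₂ hconfV
    obtain ⟨rV, -, harV, -, -⟩ := conf_section hconfV hσV
    obtain ⟨M, gM, jM, qM, hPOM, hconfM, hgM, -⟩ := conf_pushout hfactG rV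
    obtain ⟨φ, m, hum, hmq⟩ := hsurj jM qM hconfM
    have hker : (gM - e ≫ m) ≫ qM = 0 := by
      rw [Preadditive.sub_comp, hgM, Category.assoc, hmq, sub_self]
    obtain ⟨ξ, hξ, -⟩ := S.is_kernel hconfM _ hker
    have hmonojM : Mono jM := mono_of_conf hconfM
    have haξ : a ≫ ξ = 𝟙 T₀ := by
      apply hmonojM.right_cancellation
      rw [Category.assoc, hξ, Preadditive.comp_sub, Category.id_comp]
      have h1 : a ≫ e ≫ m = 0 := by rw [← Category.assoc, S.comp_zero hae, zero_comp]
      have h2 : a ≫ gM = jM := by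
        rw [← habar1, Category.assoc, hPOM.w, ← Category.assoc, harV, Category.id_comp]
      rw [h1, h2, sub_zero]
    obtain ⟨s, -, hs, -, -⟩ := conf_retraction hae haξ
    exact ⟨s, hs⟩
  -- step 6: conflations `X → M → R` with `X ∈ T` split
  have M6bS : ∀ {X M : E}, X ∈ T → ∀ (i : X ⟶ M) (d : M ⟶ R), S.conf i d →
      ∃ s : R ⟶ M, s ≫ d = 𝟙 R := by
    intro X M hX i d hid
    obtain ⟨n, ⟨e⟩⟩ := hTgen X hX
    obtain ⟨r, hr⟩ := split_sum_kernel e (fun i0 d0 hc => by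
        obtain ⟨s0, hs0⟩ := M6a i0 d0 hc
        exact retraction_of_section hc hs0) hid
    obtain ⟨s, -, hs, -, -⟩ := conf_retraction hid hr
    exact ⟨s, hs⟩
  -- step 7: conflations `f → P → R` with `f ∈ T^⊥` split
  have M6d : ∀ {f P : E}, f ∈ rightPerp S T → ∀ (b₀ : f ⟶ P) (e₀ : P ⟶ R), S.conf b₀ e₀ →
      ∃ r : P ⟶ f, b₀ ≫ r = 𝟙 f := by
    intro f P hf b₀ e₀ hbe
    obtain ⟨V', v₁', v₂', bbar, sqV', hconfV', hbbar1, -⟩ := conf_pullback hbe u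
    obtain ⟨r', hr'⟩ := (hf T' hT').2 V' bbar v₂' hconfV'
    have hfactG : S.conf v₁' (e₀ ≫ p) := conf_pullback_comp hbe hconf sqV'
    obtain ⟨M', g', j'', q'', hPO', hconfM', hg', -⟩ := conf_pushout hfactG r'
    have hM' : M' ∈ rightPerp S T := by
      intro t ht
      constructor
      · intro h0
        have hq : h0 ≫ q'' = 0 := (hQ t ht).1 (h0 ≫ q'')
        obtain ⟨h', hh', -⟩ := S.is_kernel hconfM' h0 hq
        rw [← hh', (hf t ht).1 h', zero_comp]
      · intro N i₂ d₂ hconf₂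
        have hypA : ∀ {M : E} (iA : f ⟶ M) (dA : M ⟶ t), S.conf iA dA →
            ∃ s : t ⟶ M, s ≫ dA = 𝟙 t := by
          intro M iA dA hc
          obtain ⟨rA, hrA⟩ := (hf t ht).2 _ iA dA hc
          obtain ⟨sA, -, hsA, -, -⟩ := conf_retraction hc hrA
          exact ⟨sA, hsA⟩
        obtain ⟨s₂, hs₂⟩ := split_of_filtration hconfM' hypA
          (fun iB dB hc => (hQ t ht).2 _ iB dB hc) hconf₂
        exact retraction_of_section hconf₂ hs₂
    obtain ⟨hsec, hhsec⟩ := hQproj hM' hQ q'' ⟨f, j'', hconfM'⟩ (𝟙 Q)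
    have hker : (g' - e₀ ≫ p ≫ hsec) ≫ q'' = 0 := by
      rw [Preadditive.sub_comp, hg', Category.assoc, Category.assoc, hhsec,
        Category.comp_id, sub_self]
    obtain ⟨ξ, hξ, -⟩ := S.is_kernel hconfM' _ hker
    have hmonoj'' : Mono j'' := mono_of_conf hconfM'
    refine ⟨ξ, ?_⟩
    apply hmonoj''.right_cancellation
    rw [Category.assoc, hξ, Preadditive.comp_sub, Category.id_comp]
    have h1 : b₀ ≫ e₀ ≫ p ≫ hsec = 0 := by
      rw [← Category.assoc, S.comp_zero hbe, zero_comp]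
    have h2 : b₀ ≫ g' = j'' := by
      rw [← hbbar1, Category.assoc, hPO'.w, ← Category.assoc, hr', Category.id_comp]
    rw [h1, h2, sub_zero]
  -- step 8: any conflation `X → Y → R` splits
  have M6e : ∀ {X Y : E} (i : X ⟶ Y) (d : Y ⟶ R), S.conf i d →
      ∃ s : R ⟶ Y, s ≫ d = 𝟙 R := by
    intro X Y i d hid
    obtain ⟨tX, fX, jX, qX, htX, hfX, hconfX⟩ := hdecomp X
    exact split_of_filtration hconfX
      (fun iA dA hc => M6bS htX iA dA hc)
      (fun iB dB hc => M6d hfX iB dB hc)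
      hid
  -- conclusion via pullbacks
  constructor
  · intro Y Z d hd f
    obtain ⟨X0, i0, hconf0⟩ := hd
    obtain ⟨P, p₁, p₂, ibar, sq, hconfP, -, -⟩ := conf_pullback hconf0 f
    obtain ⟨s, hs⟩ := M6e ibar p₂ hconfP
    refine ⟨s ≫ p₁, ?_⟩
    rw [Category.assoc, sq.w, ← Category.assoc, hs, Category.id_comp]
  · intro Y Z d hd f
    obtain ⟨X0, i0, hconf0⟩ := hd
    obtain ⟨P, p₁, p₂, ibar, sq, hconfP, -, -⟩ := conf_pullback hconf0 f
    obtain ⟨s, hs⟩ := M4 hT₀ ibar p₂ hconfP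
    refine ⟨s ≫ p₁, ?_⟩
    rw [Category.assoc, sq.w, ← Category.assoc, hs, Category.id_comp]


end ExactCatPaper
end

section
/- Let P ⊂ E be a projectively generating subcategory of an exact category E (all objects of P are projective and every object of E admits a deflation from an object of P). Then for every abelian category B, restriction Γ : Rex(E, B) → Fun(P, B), F ↦ F|_P, is an equivalence of categories. -/
open CategoryTheory CategoryTheory.Limits ZeroObject

universe v u

namespace ExactCatPaper

variable (E : Type u) [Category.{v} E] [Preadditive E] [HasZeroObject E]

variable {E}

variable {B : Type*} [Category B] [Abelian B]

/-- An additive functor `F : E ⥤ B` to an abelian category is right exact: it sends every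
conflation `X → Y → Z` to an exact sequence `F X → F Y → F Z → 0`. -/
def IsRightExact (S : ExactStructure E) (F : E ⥤ B) : Prop :=
  F.Additive ∧
  ∀ {X Y Z : E} (i : X ⟶ Y) (d : Y ⟶ Z), S.conf i d →
    Epi (F.map d) ∧
      ∀ (w : F.map i ≫ F.map d = 0), (ShortComplex.mk (F.map i) (F.map d) w).Exact

lemma restriction_additive (S : ExactStructure E) (P : Set E)
    (F : ObjectProperty.FullSubcategory (IsRightExact (B := B) S)) :
    (ObjectProperty.ι (· ∈ P) ⋙ F.obj).Additive := by
  haveI := F.property.1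
  infer_instance

/-- The restriction functor `Γ : Rex(E, B) ⥤ Fun(P, B)`, `F ↦ F|_P`, to the category of
additive functors on the projectively generating subcategory `P`. -/
def restrictionToP (S : ExactStructure E) (P : Set E) :
    ObjectProperty.FullSubcategory (IsRightExact (B := B) S) ⥤
      ObjectProperty.FullSubcategory (fun G : ObjectProperty.FullSubcategory (· ∈ P) ⥤ B => G.Additive) where
  obj F := ⟨ObjectProperty.ι (· ∈ P) ⋙ F.obj, restriction_additive S P F⟩
  map α := ObjectProperty.homMk (Functor.whiskerLeft (ObjectProperty.ι (· ∈ P)) α.hom)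

set_option linter.unusedSectionVars false

section Construction


variable (S : ExactStructure E) (P : Set E)

/-- Auxiliary: a two-step projective presentation of an object `X`. -/
structure PresData (X : E) where
  p : E
  hp : p ∈ P
  d : p ⟶ X
  K : E
  i : K ⟶ p
  hconf : S.conf i d
  q : E
  hq : q ∈ P
  e : q ⟶ K
  he : S.IsDeflation e

variable {S P}

/-- The composite `q ⟶ K ⟶ p` of a presentation. -/
def PresData.r {X : E} (σ : PresData S P X) : σ.q ⟶ σ.p := σ.e ≫ σ.i

lemma PresData.r_d {X : E} (σ : PresData S P X) : σ.r ≫ σ.d = 0 := by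
  rw [PresData.r, Category.assoc, S.comp_zero σ.hconf, comp_zero]

variable (hproj : ∀ p ∈ P, ∀ {Y Z : E} (d : Y ⟶ Z), S.IsDeflation d →
      ∀ f : p ⟶ Z, ∃ g : p ⟶ Y, g ≫ d = f)
variable (hgen : ∀ X : E, ∃ (p : E) (d : p ⟶ X), p ∈ P ∧ S.IsDeflation d)

/-- A choice of presentation for every object. -/
noncomputable def pres (X : E) : PresData S P X :=
  Classical.choice <| by
    obtain ⟨p, d, hp, K, i, hconf⟩ := hgen X
    obtain ⟨q, e, hq, he⟩ := hgen K
    exact ⟨⟨p, hp, d, K, i, hconf, q, hq, e, he⟩⟩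

include hproj in
lemma exists_lift {X : E} (σ : PresData S P X) {x : E} (hx : x ∈ P) (f : x ⟶ X) :
    ∃ g : x ⟶ σ.p, g ≫ σ.d = f :=
  hproj x hx σ.d ⟨σ.K, σ.i, σ.hconf⟩ f

include hproj in
lemma factor_through_r {X : E} (σ : PresData S P X) {x : E} (hx : x ∈ P)
    (f : x ⟶ σ.p) (hf : f ≫ σ.d = 0) : ∃ m : x ⟶ σ.q, m ≫ σ.r = f := by
  obtain ⟨k, hk, -⟩ := S.is_kernel σ.hconf f hf
  obtain ⟨m, hm⟩ := hproj x hx σ.e σ.he k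
  exact ⟨m, by rw [PresData.r, ← Category.assoc, hm, hk]⟩

variable (Φ : ObjectProperty.FullSubcategory (· ∈ P) ⥤ B) [Φ.Additive]

/-- `Φ` applied to a morphism of `E` between objects of `P`. -/
def Pmap {x y : E} (hx : x ∈ P) (hy : y ∈ P) (f : x ⟶ y) :
    Φ.obj ⟨x, hx⟩ ⟶ Φ.obj ⟨y, hy⟩ :=
  Φ.map (X := ⟨x, hx⟩) (Y := ⟨y, hy⟩) (ObjectProperty.homMk f)

lemma Pmap_comp {x y z : E} (hx : x ∈ P) (hy : y ∈ P) (hz : z ∈ P) (f : x ⟶ y) (g : y ⟶ z) :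
    Pmap Φ hx hz (f ≫ g) = Pmap Φ hx hy f ≫ Pmap Φ hy hz g :=
  Φ.map_comp (X := ⟨x, hx⟩) (Y := ⟨y, hy⟩) (Z := ⟨z, hz⟩) (ObjectProperty.homMk f) (ObjectProperty.homMk g)

lemma Pmap_id {x : E} (hx : x ∈ P) : Pmap Φ hx hx (𝟙 x) = 𝟙 _ :=
  Φ.map_id (⟨x, hx⟩ : ObjectProperty.FullSubcategory (· ∈ P))

lemma Pmap_sub {x y : E} (hx : x ∈ P) (hy : y ∈ P) (f g : x ⟶ y) :
    Pmap Φ hx hy (f - g) = Pmap Φ hx hy f - Pmap Φ hx hy g :=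
  Φ.map_sub (X := ⟨x, hx⟩) (Y := ⟨y, hy⟩) (f := ObjectProperty.homMk f) (g := ObjectProperty.homMk g)

lemma Pmap_add {x y : E} (hx : x ∈ P) (hy : y ∈ P) (f g : x ⟶ y) :
    Pmap Φ hx hy (f + g) = Pmap Φ hx hy f + Pmap Φ hx hy g :=
  Φ.map_add (X := ⟨x, hx⟩) (Y := ⟨y, hy⟩) (f := ObjectProperty.homMk f) (g := ObjectProperty.homMk g)

lemma Pmap_zero {x y : E} (hx : x ∈ P) (hy : y ∈ P) :
    Pmap Φ hx hy (0 : x ⟶ y) = 0 :=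
  Φ.map_zero (⟨x, hx⟩ : ObjectProperty.FullSubcategory (· ∈ P)) ⟨y, hy⟩

/-- The object part of the extension of `Φ`. -/
noncomputable abbrev FObj (X : E) : B :=
  cokernel (Pmap Φ (pres hgen X).hq (pres hgen X).hp (pres hgen X).r)

/-- The canonical projection `Φ p₀ ⟶ F X`. -/
noncomputable def Fpi (X : E) :
    Φ.obj ⟨(pres hgen X).p, (pres hgen X).hp⟩ ⟶ FObj hgen Φ X :=
  cokernel.π _

instance Fpi_epi (X : E) : Epi (Fpi hgen Φ X) := by
  unfold Fpi; infer_instance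

include hproj in
lemma Fpi_welldef {X x : E} (hx : x ∈ P) (g g' : x ⟶ (pres hgen X).p)
    (h : g ≫ (pres hgen X).d = g' ≫ (pres hgen X).d) :
    Pmap Φ hx (pres hgen X).hp g ≫ Fpi hgen Φ X =
      Pmap Φ hx (pres hgen X).hp g' ≫ Fpi hgen Φ X := by
  obtain ⟨m, hm⟩ := factor_through_r hproj (pres hgen X) hx (g - g')
    (by rw [Preadditive.sub_comp, h, sub_self])
  have h2 : Pmap Φ hx (pres hgen X).hp g - Pmap Φ hx (pres hgen X).hp g' =
      Pmap Φ hx (pres hgen X).hq m ≫ Pmap Φ (pres hgen X).hq (pres hgen X).hp (pres hgen X).r := by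
    rw [← Pmap_comp, hm, Pmap_sub]
  have h3 : Pmap Φ (pres hgen X).hq (pres hgen X).hp (pres hgen X).r ≫ Fpi hgen Φ X = 0 :=
    cokernel.condition _
  rw [← sub_eq_zero, ← Preadditive.sub_comp, h2, Category.assoc, h3, comp_zero]

/-- `Φ` of a map `x ⟶ X` with `x ∈ P`, landing in `F X`. -/
noncomputable def toF {x X : E} (hx : x ∈ P) (f : x ⟶ X) :
    Φ.obj ⟨x, hx⟩ ⟶ FObj hgen Φ X :=
  Pmap Φ hx (pres hgen X).hp (exists_lift hproj (pres hgen X) hx f).choose ≫ Fpi hgen Φ X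

lemma toF_eq {x X : E} (hx : x ∈ P) (f : x ⟶ X) (g : x ⟶ (pres hgen X).p)
    (hg : g ≫ (pres hgen X).d = f) :
    toF hproj hgen Φ hx f = Pmap Φ hx (pres hgen X).hp g ≫ Fpi hgen Φ X :=
  Fpi_welldef hproj hgen Φ hx _ g
    ((exists_lift hproj (pres hgen X) hx f).choose_spec.trans hg.symm)

lemma toF_d (X : E) :
    toF hproj hgen Φ (pres hgen X).hp (pres hgen X).d = Fpi hgen Φ X := by
  rw [toF_eq hproj hgen Φ _ _ (𝟙 _) (Category.id_comp _), Pmap_id, Category.id_comp]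

lemma Pmap_toF {x y X : E} (hx : x ∈ P) (hy : y ∈ P) (g : x ⟶ y) (f : y ⟶ X) :
    Pmap Φ hx hy g ≫ toF hproj hgen Φ hy f = toF hproj hgen Φ hx (g ≫ f) := by
  obtain ⟨l, hl⟩ := exists_lift hproj (pres hgen X) hy f
  rw [toF_eq hproj hgen Φ hy f l hl,
    toF_eq hproj hgen Φ hx (g ≫ f) (g ≫ l) (by rw [Category.assoc, hl]),
    Pmap_comp Φ hx hy (pres hgen X).hp, Category.assoc]

lemma toF_add {x X : E} (hx : x ∈ P) (f f' : x ⟶ X) :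
    toF hproj hgen Φ hx (f + f') = toF hproj hgen Φ hx f + toF hproj hgen Φ hx f' := by
  obtain ⟨l, hl⟩ := exists_lift hproj (pres hgen X) hx f
  obtain ⟨l', hl'⟩ := exists_lift hproj (pres hgen X) hx f'
  rw [toF_eq hproj hgen Φ hx f l hl, toF_eq hproj hgen Φ hx f' l' hl',
    toF_eq hproj hgen Φ hx (f + f') (l + l') (by rw [Preadditive.add_comp, hl, hl']),
    Pmap_add, Preadditive.add_comp]

lemma toF_zero {x X : E} (hx : x ∈ P) :
    toF hproj hgen Φ hx (0 : x ⟶ X) = 0 := by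
  rw [toF_eq hproj hgen Φ hx 0 0 zero_comp, Pmap_zero, zero_comp]

lemma toF_sub {x X : E} (hx : x ∈ P) (f f' : x ⟶ X) :
    toF hproj hgen Φ hx (f - f') = toF hproj hgen Φ hx f - toF hproj hgen Φ hx f' := by
  have := toF_add hproj hgen Φ hx (f - f') f'
  rw [sub_add_cancel] at this
  rw [this]; abel

/-- The morphism part of the extension of `Φ`. -/
noncomputable def Fmap {X Y : E} (f : X ⟶ Y) : FObj hgen Φ X ⟶ FObj hgen Φ Y :=
  cokernel.desc _ (toF hproj hgen Φ (pres hgen X).hp ((pres hgen X).d ≫ f)) (by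
    rw [Pmap_toF hproj hgen Φ (pres hgen X).hq (pres hgen X).hp, ← Category.assoc,
      PresData.r_d, zero_comp, toF_zero])

lemma Fpi_Fmap {X Y : E} (f : X ⟶ Y) :
    Fpi hgen Φ X ≫ Fmap hproj hgen Φ f =
      toF hproj hgen Φ (pres hgen X).hp ((pres hgen X).d ≫ f) :=
  cokernel.π_desc _ _ _

lemma toF_Fmap {x X Y : E} (hx : x ∈ P) (g : x ⟶ X) (f : X ⟶ Y) :
    toF hproj hgen Φ hx g ≫ Fmap hproj hgen Φ f = toF hproj hgen Φ hx (g ≫ f) := by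
  obtain ⟨l, hl⟩ := exists_lift hproj (pres hgen X) hx g
  rw [toF_eq hproj hgen Φ hx g l hl, Category.assoc, Fpi_Fmap,
    Pmap_toF hproj hgen Φ hx (pres hgen X).hp, ← Category.assoc, hl]

/-- The extension of `Φ` to a functor `E ⥤ B`. -/
noncomputable abbrev Fctor : E ⥤ B where
  obj := FObj hgen Φ
  map := Fmap hproj hgen Φ
  map_id X := by
    rw [← cancel_epi (Fpi hgen Φ X), Fpi_Fmap, Category.comp_id, Category.comp_id, toF_d]
  map_comp {X Y Z} f g := by
    rw [← cancel_epi (Fpi hgen Φ X), Fpi_Fmap hproj hgen Φ (f ≫ g),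
      ← Category.assoc (Fpi hgen Φ X), Fpi_Fmap hproj hgen Φ f,
      toF_Fmap hproj hgen Φ (pres hgen X).hp ((pres hgen X).d ≫ f) g, Category.assoc]

lemma Fctor_additive : (Fctor hproj hgen Φ).Additive := by
  constructor
  intro X Y f g
  show Fmap hproj hgen Φ (f + g) = Fmap hproj hgen Φ f + Fmap hproj hgen Φ g
  rw [← cancel_epi (Fpi hgen Φ X), Preadditive.comp_add, Fpi_Fmap hproj hgen Φ (f + g),
    Fpi_Fmap hproj hgen Φ f, Fpi_Fmap hproj hgen Φ g, Preadditive.comp_add, toF_add]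

lemma Fctor_rightExact : IsRightExact S (Fctor hproj hgen Φ) := by
  refine ⟨Fctor_additive hproj hgen Φ, ?_⟩
  intro X Y Z i d hconf
  set σ := pres hgen Z with hσZ
  obtain ⟨h, hh⟩ := hproj σ.p σ.hp d ⟨X, i, hconf⟩ σ.d
  have hfac : toF hproj hgen Φ σ.hp h ≫ Fmap hproj hgen Φ d = Fpi hgen Φ Z := by
    rw [toF_Fmap, hh, toF_d]
  have hepi : Epi (Fmap hproj hgen Φ d) := epi_of_epi_fac hfac
  refine ⟨hepi, fun w => ?_⟩
  apply ShortComplex.exact_of_g_is_cokernel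
  haveI : Epi (ShortComplex.mk ((Fctor hproj hgen Φ).map i) ((Fctor hproj hgen Φ).map d) w).g :=
    hepi
  refine CokernelCofork.IsColimit.ofπ' _ _ (fun {W} t ht => ?_)
  replace ht : Fmap hproj hgen Φ i ≫ t = 0 := ht
  -- construct the descent
  have hrh : (σ.r ≫ h) ≫ d = 0 := by rw [Category.assoc, hh, PresData.r_d]
  let w' : σ.q ⟶ X := (S.is_kernel hconf (σ.r ≫ h) hrh).exists.choose
  have hw' : w' ≫ i = σ.r ≫ h := (S.is_kernel hconf (σ.r ≫ h) hrh).exists.choose_spec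
  have cond : Pmap Φ σ.hq σ.hp σ.r ≫ (toF hproj hgen Φ σ.hp h ≫ t) = 0 := by
    rw [← Category.assoc, Pmap_toF hproj hgen Φ σ.hq σ.hp, ← hw',
      ← toF_Fmap hproj hgen Φ σ.hq w' i, Category.assoc, ht, comp_zero]
  refine ⟨cokernel.desc _ (toF hproj hgen Φ σ.hp h ≫ t) cond, ?_⟩
  have hu : Fpi hgen Φ Z ≫ cokernel.desc _ (toF hproj hgen Φ σ.hp h ≫ t) cond =
      toF hproj hgen Φ σ.hp h ≫ t := cokernel.π_desc _ _ _
  -- show F d ≫ u = t by precomposing with the epi Fpi Y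
  show Fmap hproj hgen Φ d ≫ cokernel.desc _ (toF hproj hgen Φ σ.hp h ≫ t) cond = t
  rw [← cancel_epi (Fpi hgen Φ Y)]
  set σY := pres hgen Y with hσY
  rw [← Category.assoc]
  have : Fpi hgen Φ Y ≫ Fmap hproj hgen Φ d = toF hproj hgen Φ σY.hp (σY.d ≫ d) :=
    Fpi_Fmap hproj hgen Φ d
  rw [this]
  let l : σY.p ⟶ σ.p := (exists_lift hproj σ σY.hp (σY.d ≫ d)).choose
  have hl : l ≫ σ.d = σY.d ≫ d := (exists_lift hproj σ σY.hp (σY.d ≫ d)).choose_spec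
  rw [toF_eq hproj hgen Φ σY.hp (σY.d ≫ d) l hl, Category.assoc, hu, ← Category.assoc,
    Pmap_toF hproj hgen Φ σY.hp σ.hp]
  -- now : toF (l ≫ h) ≫ t = Fpi Y ≫ t
  have hδ : ((l ≫ h) - σY.d) ≫ d = 0 := by
    rw [Preadditive.sub_comp, Category.assoc, hh, hl, sub_self]
  let w'' : σY.p ⟶ X := (S.is_kernel hconf ((l ≫ h) - σY.d) hδ).exists.choose
  have hw'' : w'' ≫ i = (l ≫ h) - σY.d :=
    (S.is_kernel hconf ((l ≫ h) - σY.d) hδ).exists.choose_spec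
  have : toF hproj hgen Φ σY.hp (l ≫ h) =
      Fpi hgen Φ Y + toF hproj hgen Φ σY.hp (w'' ≫ i) := by
    rw [← toF_d hproj hgen Φ Y, ← toF_add, hw'']
    congr 1
    abel
  rw [this, Preadditive.add_comp]
  have : toF hproj hgen Φ σY.hp (w'' ≫ i) ≫ t = 0 := by
    rw [← toF_Fmap hproj hgen Φ σY.hp w'' i, Category.assoc, ht, comp_zero]
  rw [this, add_zero]

/-- The restriction of the extension to `P` is isomorphic to `Φ`: the unit map. -/
noncomputable def toFunit (x : ObjectProperty.FullSubcategory (· ∈ P)) :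
    Φ.obj x ⟶ FObj hgen Φ x.obj :=
  toF hproj hgen Φ x.property (𝟙 x.obj)

lemma toFunit_iso (x : ObjectProperty.FullSubcategory (· ∈ P)) : IsIso (toFunit hproj hgen Φ x) := by
  set σ := pres hgen x.obj with hσ
  have cond : Pmap Φ σ.hq σ.hp σ.r ≫ Pmap Φ σ.hp x.property σ.d = 0 := by
    rw [← Pmap_comp Φ σ.hq σ.hp x.property, PresData.r_d, Pmap_zero]
  refine ⟨cokernel.desc _ (Pmap Φ σ.hp x.property σ.d) cond, ?_, ?_⟩
  · obtain ⟨s, hs⟩ := hproj x.obj x.property σ.d ⟨σ.K, σ.i, σ.hconf⟩ (𝟙 x.obj)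
    have h1 : toFunit hproj hgen Φ x =
        Pmap Φ x.property σ.hp s ≫ Fpi hgen Φ x.obj :=
      toF_eq hproj hgen Φ x.property (𝟙 x.obj) s hs
    rw [toFunit] at h1 ⊢
    rw [h1, Category.assoc]
    have h2 : Fpi hgen Φ x.obj ≫ cokernel.desc _ (Pmap Φ σ.hp x.property σ.d) cond =
        Pmap Φ σ.hp x.property σ.d := cokernel.π_desc _ _ _
    rw [h2, ← Pmap_comp Φ x.property σ.hp x.property, hs, Pmap_id]
  · rw [← cancel_epi (Fpi hgen Φ x.obj), ← Category.assoc]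
    have h2 : Fpi hgen Φ x.obj ≫ cokernel.desc _ (Pmap Φ σ.hp x.property σ.d) cond =
        Pmap Φ σ.hp x.property σ.d := cokernel.π_desc _ _ _
    rw [h2, Category.comp_id, toFunit, Pmap_toF hproj hgen Φ σ.hp x.property,
      Category.comp_id, toF_d]

/-- The natural isomorphism `Φ ≅ (F restricted to P)`. -/
noncomputable def unitIso :
    Φ ≅ ObjectProperty.ι (· ∈ P) ⋙ Fctor hproj hgen Φ := by
  haveI : ∀ x, IsIso (toFunit hproj hgen Φ x) := toFunit_iso hproj hgen Φ
  refine NatIso.ofComponents (fun x => asIso (toFunit hproj hgen Φ x)) ?_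
  intro x y f
  show Pmap Φ x.property y.property f.hom ≫ toFunit hproj hgen Φ y =
    toFunit hproj hgen Φ x ≫ Fmap hproj hgen Φ f.hom
  rw [toFunit, toFunit, Pmap_toF hproj hgen Φ x.property y.property, Category.comp_id,
    toF_Fmap, Category.id_comp]

end Construction
/-- Let `P ⊂ E` be a projectively generating subcategory of an exact
category `E` (all objects of `P` are projective — they have the lifting property against
deflations, equivalently `Ext¹(P,−) = 0` — and every object of `E` admits a deflation
from an object of `P`). Then for every abelian category `B`, the restriction
`Γ : Rex(E, B) → Fun(P, B)`, `F ↦ F|_P`, is an equivalence of categories. -/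
theorem restriction_equivalence
    (S : ExactStructure E) (P : Set E)
    (hproj : ∀ p ∈ P, ∀ {Y Z : E} (d : Y ⟶ Z), S.IsDeflation d →
      ∀ f : p ⟶ Z, ∃ g : p ⟶ Y, g ≫ d = f)
    (hgen : ∀ X : E, ∃ (p : E) (d : p ⟶ X), p ∈ P ∧ S.IsDeflation d) :
    (restrictionToP (B := B) S P).IsEquivalence := by
  refine { faithful := ?_, full := ?_, essSurj := ?_ }
  · -- Faithful
    constructor
    intro F G α β h
    apply ObjectProperty.hom_ext
    apply NatTrans.ext
    funext X
    haveI : Epi (F.obj.map (pres hgen X).d) :=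
      (F.property.2 (pres hgen X).i (pres hgen X).d (pres hgen X).hconf).1
    rw [← cancel_epi (F.obj.map (pres hgen X).d)]
    have happ : α.hom.app (pres hgen X).p = β.hom.app (pres hgen X).p :=
      congrArg (fun γ => γ.hom.app ⟨(pres hgen X).p, (pres hgen X).hp⟩) h
    rw [α.hom.naturality (pres hgen X).d, β.hom.naturality (pres hgen X).d, happ]
  · -- Full
    constructor
    intro F G β
    haveI hFadd : F.obj.Additive := F.property.1
    haveI hGadd : G.obj.Additive := G.property.1
    have exdesc : ∀ X : E, ∃ a : F.obj.obj X ⟶ G.obj.obj X,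
        F.obj.map (pres hgen X).d ≫ a =
          β.hom.app ⟨(pres hgen X).p, (pres hgen X).hp⟩ ≫ G.obj.map (pres hgen X).d := by
      intro X
      have hE := F.property.2 (pres hgen X).i (pres hgen X).d (pres hgen X).hconf
      have w : F.obj.map (pres hgen X).i ≫ F.obj.map (pres hgen X).d = 0 := by
        rw [← F.obj.map_comp, S.comp_zero (pres hgen X).hconf, F.obj.map_zero]
      have hEx := hE.2 w
      haveI : Epi (ShortComplex.mk (F.obj.map (pres hgen X).i)
          (F.obj.map (pres hgen X).d) w).g := hE.1
      obtain ⟨A, j, hconfe⟩ := (pres hgen X).he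
      haveI : Epi (F.obj.map (pres hgen X).e) := (F.property.2 j (pres hgen X).e hconfe).1
      have hnat : F.obj.map (pres hgen X).r ≫ β.hom.app ⟨(pres hgen X).p, (pres hgen X).hp⟩ =
          β.hom.app ⟨(pres hgen X).q, (pres hgen X).hq⟩ ≫ G.obj.map (pres hgen X).r :=
        β.hom.naturality (X := ⟨(pres hgen X).q, (pres hgen X).hq⟩)
          (Y := ⟨(pres hgen X).p, (pres hgen X).hp⟩) (ObjectProperty.homMk (pres hgen X).r)
      have hk : F.obj.map (pres hgen X).i ≫
          (β.hom.app ⟨(pres hgen X).p, (pres hgen X).hp⟩ ≫ G.obj.map (pres hgen X).d) = 0 := by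
        rw [← cancel_epi (F.obj.map (pres hgen X).e), comp_zero, ← Category.assoc,
          ← F.obj.map_comp]
        show F.obj.map (pres hgen X).r ≫
          (β.hom.app ⟨(pres hgen X).p, (pres hgen X).hp⟩ ≫ G.obj.map (pres hgen X).d) = 0
        erw [← Category.assoc, hnat, Category.assoc, ← G.obj.map_comp, PresData.r_d,
          G.obj.map_zero, comp_zero]
      exact ⟨hEx.desc _ hk, hEx.g_desc _ hk⟩
    choose a ha using exdesc
    have key : ∀ (X : E) {x : E} (hx : x ∈ P) (w0 : x ⟶ X),
        F.obj.map w0 ≫ a X = β.hom.app ⟨x, hx⟩ ≫ G.obj.map w0 := by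
      intro X x hx w0
      obtain ⟨l, hl⟩ := hproj x hx (pres hgen X).d
        ⟨(pres hgen X).K, (pres hgen X).i, (pres hgen X).hconf⟩ w0
      have hnat : F.obj.map l ≫ β.hom.app ⟨(pres hgen X).p, (pres hgen X).hp⟩ =
          β.hom.app ⟨x, hx⟩ ≫ G.obj.map l :=
        β.hom.naturality (X := ⟨x, hx⟩) (Y := ⟨(pres hgen X).p, (pres hgen X).hp⟩) (ObjectProperty.homMk l)
      rw [← hl, F.obj.map_comp, G.obj.map_comp, Category.assoc, ha]
      erw [← Category.assoc, hnat, Category.assoc]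
      rfl
    refine ⟨ObjectProperty.homMk { app := a, naturality := ?_ }, ?_⟩
    · intro X Y f
      haveI : Epi (F.obj.map (pres hgen X).d) :=
        (F.property.2 (pres hgen X).i (pres hgen X).d (pres hgen X).hconf).1
      rw [← cancel_epi (F.obj.map (pres hgen X).d)]
      erw [← Category.assoc, ← F.obj.map_comp, key Y (pres hgen X).hp ((pres hgen X).d ≫ f),
        G.obj.map_comp, ← Category.assoc (F.obj.map (pres hgen X).d), ha, Category.assoc]
      rfl
    · apply ObjectProperty.hom_ext
      apply NatTrans.ext
      funext x
      show a x.obj = β.hom.app x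
      haveI : Epi (F.obj.map (pres hgen x.obj).d) :=
        (F.property.2 (pres hgen x.obj).i (pres hgen x.obj).d (pres hgen x.obj).hconf).1
      erw [← cancel_epi (F.obj.map (pres hgen x.obj).d), ha]
      exact (β.hom.naturality (X := ⟨(pres hgen x.obj).p, (pres hgen x.obj).hp⟩)
        (Y := x) (ObjectProperty.homMk (pres hgen x.obj).d)).symm
  · -- Essentially surjective
    constructor
    intro Y
    haveI : Y.obj.Additive := Y.property
    refine ⟨⟨Fctor hproj hgen Y.obj, Fctor_rightExact hproj hgen Y.obj⟩, ⟨?_⟩⟩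
    exact ObjectProperty.isoMk _ (unitIso hproj hgen Y.obj).symm

end ExactCatPaper
end

section
/- Let C be a k-linear additive category additively generated by finitely many objects C₁, …, Cₙ. If the endomorphism algebra A = End(⊕ᵢ Cᵢ) is right coherent, then C has weak kernels. -/
open CategoryTheory CategoryTheory.Limits

universe v u

namespace CoherentWeakKernels

/-- A ring is right coherent if every finitely generated right ideal is finitely
presented (right ideals are submodules of `A` as a right `A`-module, i.e. as an
`Aᵐᵒᵖ`-module). -/
def RightCoherentRing (A : Type*) [Ring A] : Prop :=
  ∀ I : Submodule Aᵐᵒᵖ A, I.FG → Module.FinitePresentation Aᵐᵒᵖ I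


section ModuleSide

variable {A : Type*} [Ring A]

lemma finite_op : Module.Finite Aᵐᵒᵖ A := by
  refine ⟨⟨{1}, ?_⟩⟩
  rw [eq_top_iff]
  intro a _
  have : a = MulOpposite.op a • (1 : A) := by
    simp [MulOpposite.smul_eq_mul_unop]
  rw [this]
  exact Submodule.smul_mem _ _ (Submodule.subset_span (by simp))

/-- linear combination map: `x ↦ ∑ t, op (x t) • v t`. -/
def combo {M : Type*} [AddCommGroup M] [Module Aᵐᵒᵖ M] {r : ℕ} (v : Fin r → M) :
    (Fin r → A) →ₗ[Aᵐᵒᵖ] M where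
  toFun x := ∑ t, MulOpposite.op (x t) • v t
  map_add' x y := by
    simp [MulOpposite.op_add, add_smul, Finset.sum_add_distrib]
  map_smul' m x := by
    simp only [RingHom.id_apply, Finset.smul_sum]
    refine Finset.sum_congr rfl fun t _ => ?_
    have : MulOpposite.op ((m • x) t) = m * MulOpposite.op (x t) := by
      simp [MulOpposite.smul_eq_mul_unop]
    rw [this, mul_smul]

lemma combo_range {M : Type*} [AddCommGroup M] [Module Aᵐᵒᵖ M] {r : ℕ} (v : Fin r → M) :
    LinearMap.range (combo v) = Submodule.span Aᵐᵒᵖ (Set.range v) := by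
  apply le_antisymm
  · rintro _ ⟨x, rfl⟩
    simp only [combo, LinearMap.coe_mk, AddHom.coe_mk]
    refine Submodule.sum_mem _ fun t _ => Submodule.smul_mem _ _ ?_
    exact Submodule.subset_span (Set.mem_range_self t)
  · rw [Submodule.span_le]
    rintro _ ⟨t, rfl⟩
    classical
    refine ⟨Pi.single t 1, ?_⟩
    simp only [combo, LinearMap.coe_mk, AddHom.coe_mk]
    rw [Finset.sum_eq_single t]
    · simp
    · intro b _ hb; simp [Pi.single_eq_of_ne hb]
    · simp

lemma ker_fg_of_coherent (hcoh : RightCoherentRing A) :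
    ∀ (q p : ℕ) (F : (Fin p → A) →ₗ[Aᵐᵒᵖ] (Fin q → A)), (LinearMap.ker F).FG := by
  intro q
  induction q with
  | zero =>
    intro p F
    have : LinearMap.ker F = ⊤ := by
      ext x; simp [LinearMap.mem_ker]; apply funext; exact fun j => j.elim0
    rw [this]
    have : Module.Finite Aᵐᵒᵖ (Fin p → A) := by
      have := finite_op (A := A); infer_instance
    exact Module.Finite.fg_top
  | succ q ih =>
    intro p F
    classical
    have hfinA : Module.Finite Aᵐᵒᵖ A := finite_op
    have hfinP : Module.Finite Aᵐᵒᵖ (Fin p → A) := inferInstance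
    set F1 : (Fin p → A) →ₗ[Aᵐᵒᵖ] A := LinearMap.proj (Fin.last q) ∘ₗ F with hF1
    have hI : (LinearMap.range F1).FG := by
      rw [LinearMap.range_eq_map]
      exact Module.Finite.fg_top.map F1
    have hfp : Module.FinitePresentation Aᵐᵒᵖ (LinearMap.range F1) :=
      hcoh _ hI
    have hker1 : (LinearMap.ker F1).FG := by
      rw [← LinearMap.ker_rangeRestrict]
      exact Module.FinitePresentation.fg_ker F1.rangeRestrict
        (LinearMap.surjective_rangeRestrict F1)
    obtain ⟨S, hS⟩ := hker1
    set r := S.card with hr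
    set v : Fin r → (Fin p → A) := fun t => ((S.equivFin.symm t : S) : Fin p → A) with hv
    have hrange : Set.range v = (S : Set (Fin p → A)) := by
      ext x
      constructor
      · rintro ⟨t, rfl⟩; exact (S.equivFin.symm t).2
      · intro hx; exact ⟨S.equivFin ⟨x, hx⟩, by simp [hv]⟩
    have hrangeh : LinearMap.range (combo v) = LinearMap.ker F1 := by
      rw [combo_range, hrange, hS]
    set h : (Fin r → A) →ₗ[Aᵐᵒᵖ] (Fin p → A) := combo v with hh
    set F' : (Fin r → A) →ₗ[Aᵐᵒᵖ] (Fin q → A) :=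
      LinearMap.funLeft Aᵐᵒᵖ A Fin.castSucc ∘ₗ F ∘ₗ h with hF'
    have key : LinearMap.ker F = Submodule.map h (LinearMap.ker F') := by
      ext y
      constructor
      · intro hy
        have hy0 : F y = 0 := hy
        have h1 : y ∈ LinearMap.range h := by
          rw [hh, hrangeh]
          show F1 y = 0
          rw [hF1]
          simp [hy0]
        obtain ⟨x, rfl⟩ := h1
        refine ⟨x, ?_, rfl⟩
        show F' x = 0
        rw [hF']
        simp [hy0]
      · rintro ⟨x, hx, rfl⟩
        have hx0 : F' x = 0 := hx
        show F (h x) = 0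
        funext j
        refine Fin.lastCases ?_ ?_ j
        · have : h x ∈ LinearMap.ker F1 := by
            rw [← hrangeh]; exact ⟨x, rfl⟩
          simpa [hF1] using this
        · intro i
          have := congrFun hx0 i
          simpa [hF'] using this
    rw [key]
    exact (ih r F').map h

end ModuleSide

section CategorySide

variable {C : Type u} [Category.{v} C] [Preadditive C] [HasFiniteBiproducts C]

lemma main (G : C)
    (hker : ∀ (q p : ℕ) (F : (Fin p → End G) →ₗ[(End G)ᵐᵒᵖ] (Fin q → End G)),
      (LinearMap.ker F).FG)
    {p q : ℕ} (f : (⨁ fun _ : Fin p => G) ⟶ ⨁ fun _ : Fin q => G) :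
    ∃ (m : ℕ) (kk : (⨁ fun _ : Fin m => G) ⟶ ⨁ fun _ : Fin p => G),
      kk ≫ f = 0 ∧ ∀ (r : ℕ) (g : (⨁ fun _ : Fin r => G) ⟶ ⨁ fun _ : Fin p => G),
        g ≫ f = 0 → ∃ t, t ≫ kk = g := by
  classical
  set A := End G with hA
  set c : Fin p → Fin q → A := fun i j =>
    (biproduct.ι (fun _ : Fin p => G) i ≫ f ≫ biproduct.π (fun _ : Fin q => G) j : G ⟶ G)
    with hc
  set F : (Fin p → A) →ₗ[Aᵐᵒᵖ] (Fin q → A) :=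
    LinearMap.pi (fun j => combo (fun i => c i j)) with hF
  have Fdef : ∀ (x : Fin p → A) (j : Fin q),
      (F x j : G ⟶ G) = ∑ i, (x i : G ⟶ G) ≫ (c i j : G ⟶ G) := by
    intro x j
    show ∑ i, MulOpposite.op (x i) • c i j = _
    exact Finset.sum_congr rfl fun i _ => rfl
  have key : ∀ (φ : G ⟶ ⨁ fun _ : Fin p => G) (j : Fin q),
      (φ ≫ f) ≫ biproduct.π (fun _ : Fin q => G) j
        = F (fun i => (φ ≫ biproduct.π (fun _ : Fin p => G) i : A)) j := by
    intro φ j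
    rw [Fdef]
    have expand : (φ ≫ f) ≫ biproduct.π (fun _ : Fin q => G) j
        = ∑ i, φ ≫ biproduct.π (fun _ : Fin p => G) i ≫ biproduct.ι (fun _ : Fin p => G) i
              ≫ f ≫ biproduct.π (fun _ : Fin q => G) j := by
      conv_lhs => rw [← Category.id_comp f, ← biproduct.total]
      simp only [Preadditive.sum_comp, Preadditive.comp_sum, Category.assoc]
    rw [expand]
    refine Finset.sum_congr rfl fun i _ => ?_
    show _ = (φ ≫ biproduct.π (fun _ : Fin p => G) i) ≫
      (biproduct.ι (fun _ : Fin p => G) i ≫ f ≫ biproduct.π (fun _ : Fin q => G) j)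
    rw [Category.assoc]
  -- generators of the kernel
  obtain ⟨S, hS⟩ := hker q p F
  set m := S.card with hm
  set v : Fin m → (Fin p → A) := fun t => ((S.equivFin.symm t : S) : Fin p → A) with hv
  have hvmem : ∀ t, F (v t) = 0 := by
    intro t
    have : v t ∈ LinearMap.ker F := by
      rw [← hS]
      exact Submodule.subset_span (S.equivFin.symm t).2
    exact this
  have hrange : Set.range v = (S : Set (Fin p → A)) := by
    ext x
    constructor
    · rintro ⟨t, rfl⟩; exact (S.equivFin.symm t).2
    · intro hx; exact ⟨S.equivFin ⟨x, hx⟩, by simp [hv]⟩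
  set φt : Fin m → (G ⟶ ⨁ fun _ : Fin p => G) :=
    fun t => biproduct.lift (fun i => (v t i : G ⟶ G)) with hφt
  have hcoords : ∀ t, (fun i => (φt t ≫ biproduct.π (fun _ : Fin p => G) i : A)) = v t := by
    intro t
    funext i
    show φt t ≫ biproduct.π (fun _ : Fin p => G) i = v t i
    simp [hφt]
  have hφtf : ∀ t, φt t ≫ f = 0 := by
    intro t
    apply biproduct.hom_ext
    intro j
    rw [key, hcoords, hvmem t]
    show (0 : Fin q → A) j = 0 ≫ biproduct.π (fun _ : Fin q => G) j
    simp
  have factor : ∀ (φ : G ⟶ ⨁ fun _ : Fin p => G), φ ≫ f = 0 →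
      ∃ a : Fin m → Aᵐᵒᵖ, φ = ∑ t, ((a t).unop : G ⟶ G) ≫ φt t := by
    intro φ hφ
    set x : Fin p → A := fun i => (φ ≫ biproduct.π (fun _ : Fin p => G) i : A) with hx
    have hxker : x ∈ Submodule.span Aᵐᵒᵖ (Set.range v) := by
      rw [hrange, hS, LinearMap.mem_ker]
      funext j
      have h2 := key φ j
      rw [hφ, Limits.zero_comp] at h2
      exact h2.symm
    obtain ⟨a, ha⟩ := (Submodule.mem_span_range_iff_exists_fun Aᵐᵒᵖ).1 hxker
    refine ⟨a, ?_⟩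
    apply biproduct.hom_ext
    intro i
    rw [Preadditive.sum_comp]
    have lhs : φ ≫ biproduct.π (fun _ : Fin p => G) i = x i := rfl
    rw [lhs, ← ha]
    show (∑ t, a t • v t) i = _
    rw [Finset.sum_apply]
    refine Finset.sum_congr rfl fun t _ => ?_
    show (a t) • (v t i) = _
    rw [MulOpposite.smul_eq_mul_unop]
    show (a t).unop ≫ (v t i : G ⟶ G) = _
    have : φt t ≫ biproduct.π (fun _ : Fin p => G) i = (v t i : G ⟶ G) := by simp [hφt]
    rw [Category.assoc, this]
  refine ⟨m, biproduct.desc φt, ?_, ?_⟩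
  · apply biproduct.hom_ext'
    intro t
    rw [biproduct.ι_desc_assoc, hφtf t, comp_zero]
  · intro r g hg
    have hψ : ∀ j : Fin r, ∃ a : Fin m → Aᵐᵒᵖ,
        biproduct.ι (fun _ : Fin r => G) j ≫ g = ∑ t, ((a t).unop : G ⟶ G) ≫ φt t := by
      intro j
      apply factor
      rw [Category.assoc, hg, comp_zero]
    choose a ha using hψ
    refine ⟨biproduct.desc (fun j => biproduct.lift (fun t => ((a j t).unop : G ⟶ G))), ?_⟩
    apply biproduct.hom_ext'
    intro j
    rw [biproduct.ι_desc_assoc, biproduct.lift_desc, ha j]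

lemma retract {n : ℕ} (Cobj : Fin n → C)
    (hgen : ∀ X : C, ∃ (m : ℕ) (g : Fin m → Fin n),
      Nonempty (X ≅ ⨁ (fun j : Fin m => Cobj (g j)))) (X : C) :
    ∃ (r : ℕ) (s : X ⟶ ⨁ fun _ : Fin r => ⨁ Cobj) (ρ : (⨁ fun _ : Fin r => ⨁ Cobj) ⟶ X),
      s ≫ ρ = 𝟙 X := by
  obtain ⟨m, gm, ⟨e⟩⟩ := hgen X
  refine ⟨m, e.hom ≫ biproduct.map (fun j => biproduct.ι Cobj (gm j)),
    biproduct.map (fun j => biproduct.π Cobj (gm j)) ≫ e.inv, ?_⟩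
  have hmm : biproduct.map (fun j : Fin m => biproduct.ι Cobj (gm j)) ≫
      biproduct.map (fun j => biproduct.π Cobj (gm j)) = 𝟙 _ := by
    apply biproduct.hom_ext
    intro j
    simp [biproduct.map_π, biproduct.ι_π_self]
  rw [Category.assoc, ← Category.assoc (biproduct.map _), hmm, Category.id_comp, e.hom_inv_id]

theorem weak_kernels_of_coherent'
    (n : ℕ) (Cobj : Fin n → C)
    (hgen : ∀ X : C, ∃ (m : ℕ) (g : Fin m → Fin n),
      Nonempty (X ≅ ⨁ (fun j : Fin m => Cobj (g j))))
    (hker : ∀ (q p : ℕ) (F : (Fin p → End (⨁ Cobj)) →ₗ[(End (⨁ Cobj))ᵐᵒᵖ]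
      (Fin q → End (⨁ Cobj))), (LinearMap.ker F).FG) :
    ∀ {X Y : C} (f : X ⟶ Y), ∃ (K : C) (kk : K ⟶ X), kk ≫ f = 0 ∧
      ∀ {Z : C} (g : Z ⟶ X), g ≫ f = 0 → ∃ t : Z ⟶ K, t ≫ kk = g := by
  intro X Y f
  obtain ⟨p, sX, rX, hX⟩ := retract Cobj hgen X
  obtain ⟨q, sY, rY, hY⟩ := retract Cobj hgen Y
  obtain ⟨m, kk', hk0, hfact⟩ := main (⨁ Cobj) hker (rX ≫ f ≫ sY)
  refine ⟨_, kk' ≫ rX, ?_, ?_⟩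
  · simpa [hY] using congrArg (· ≫ rY) hk0
  · intro Z g hg
    obtain ⟨r, sZ, rZ, hZ⟩ := retract Cobj hgen Z
    have hg' : (rZ ≫ g ≫ sX) ≫ rX ≫ f ≫ sY = 0 := by
      have h3 : (rZ ≫ g ≫ sX) ≫ rX ≫ f ≫ sY = rZ ≫ g ≫ (sX ≫ rX) ≫ f ≫ sY := by simp
      rw [h3, hX]
      simp [reassoc_of% hg]
    obtain ⟨t', ht'⟩ := hfact r (rZ ≫ g ≫ sX) hg'
    refine ⟨sZ ≫ t', ?_⟩
    have h2 : (sZ ≫ t') ≫ kk' ≫ rX = sZ ≫ (t' ≫ kk') ≫ rX := by simp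
    rw [h2, ht']
    have h4 : sZ ≫ (rZ ≫ g ≫ sX) ≫ rX = (sZ ≫ rZ) ≫ g ≫ sX ≫ rX := by simp
    rw [h4, hZ, hX]
    simp

end CategorySide

/-- Let `C` be a `k`-linear additive category additively generated by
finitely many objects `C₁, …, Cₙ`. If the endomorphism algebra `A = End(⊕ᵢ Cᵢ)` is right
coherent, then `C` has weak kernels. -/
theorem weak_kernels_of_coherent
    (k : Type*) [Field k]
    (C : Type u) [Category.{v} C] [Preadditive C] [CategoryTheory.Linear k C]
    [HasFiniteBiproducts C]
    (n : ℕ) (Cobj : Fin n → C)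
    (hgen : ∀ X : C, ∃ (m : ℕ) (g : Fin m → Fin n),
      Nonempty (X ≅ ⨁ (fun j : Fin m => Cobj (g j))))
    (hcoh : RightCoherentRing (End (⨁ Cobj))) :
    ∀ {X Y : C} (f : X ⟶ Y), ∃ (K : C) (kk : K ⟶ X), kk ≫ f = 0 ∧
      ∀ {Z : C} (g : Z ⟶ X), g ≫ f = 0 → ∃ t : Z ⟶ K, t ≫ kk = g := by
  intro X Y f
  exact weak_kernels_of_coherent' n Cobj hgen (ker_fg_of_coherent hcoh) f

end CoherentWeakKernels
end

section
/- Let C be a k-linear, Hom-finite additive category additively generated by objects C₁,…,Cₙ such that each endomorphism ring End(Cᵢ) is local. Then C is idempotent split: every idempotent endomorphism in C splits. -/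
open CategoryTheory CategoryTheory.Limits

universe v u

namespace LocalIdempotentSplit

section Aux

variable {C : Type u} [Category.{v} C] [Preadditive C]

/-- An idempotent `e` splits. -/
def Splits {X : C} (e : X ⟶ X) : Prop :=
  ∃ (Y : C) (i : Y ⟶ X) (p : X ⟶ Y), i ≫ p = 𝟙 Y ∧ p ≫ i = e

lemma splits_of_iso {X W : C} (h : X ≅ W) (e : X ⟶ X)
    (hs : Splits (h.inv ≫ e ≫ h.hom)) : Splits e := by
  obtain ⟨Y, i, p, h1, h2⟩ := hs
  refine ⟨Y, i ≫ h.inv, h.hom ≫ p, ?_, ?_⟩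
  · rw [Category.assoc, Iso.inv_hom_id_assoc, h1]
  · calc (h.hom ≫ p) ≫ i ≫ h.inv = h.hom ≫ (p ≫ i) ≫ h.inv := by simp
    _ = h.hom ≫ (h.inv ≫ e ≫ h.hom) ≫ h.inv := by rw [h2]
    _ = e := by simp

/-- The Gaussian elimination core: if `f` is an idempotent on `A ⊞ Y` whose `(1,1)` entry is
a unit in `End A`, then `p := b ≫ a` (with `a, b` as below) is a "sub-idempotent" of `f`
splitting off `A`, and its complement `𝟙 - p` splits through `Y`. -/
lemma core {A Y : C} [HasBinaryBiproduct A Y] (f : A ⊞ Y ⟶ A ⊞ Y) (hf : f ≫ f = f)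
    (α : End A) (hα : (α : A ⟶ A) = biprod.inl ≫ f ≫ biprod.fst) (hu : IsUnit α) :
    ∃ (a : A ⟶ A ⊞ Y) (b : A ⊞ Y ⟶ A) (j : Y ⟶ A ⊞ Y) (r : A ⊞ Y ⟶ Y),
      a ≫ b = 𝟙 A ∧ j ≫ r = 𝟙 Y ∧ r ≫ j = 𝟙 (A ⊞ Y) - b ≫ a ∧
      f ≫ (b ≫ a) = b ≫ a ∧ (b ≫ a) ≫ f = b ≫ a := by
  obtain ⟨v, hv⟩ := hu
  subst hα
  set α : A ⟶ A := biprod.inl ≫ f ≫ biprod.fst with hα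
  set β : A ⟶ A := (↑(v⁻¹) : End A) with hβ
  have hαβ : α ≫ β = 𝟙 A := by
    have h1 : (v⁻¹ : (End A)ˣ).val * v.val = 1 := by simp
    rw [End.mul_def] at h1
    rw [hβ, ← hv]; exact h1
  have hβα : β ≫ α = 𝟙 A := by
    have h1 : v.val * (v⁻¹ : (End A)ˣ).val = 1 := by simp
    rw [End.mul_def] at h1
    rw [hβ, ← hv]; exact h1
  set a : A ⟶ A ⊞ Y := biprod.inl ≫ f with ha
  set b : A ⊞ Y ⟶ A := f ≫ biprod.fst ≫ β with hb
  have hab : a ≫ b = 𝟙 A := by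
    rw [ha, hb]
    calc (biprod.inl ≫ f) ≫ f ≫ biprod.fst ≫ β
        = biprod.inl ≫ (f ≫ f) ≫ biprod.fst ≫ β := by simp
    _ = (biprod.inl ≫ f ≫ biprod.fst) ≫ β := by rw [hf]; simp
    _ = 𝟙 A := hαβ
  have hinlb : biprod.inl ≫ b = 𝟙 A := by
    rw [hb]
    calc biprod.inl ≫ f ≫ biprod.fst ≫ β = (biprod.inl ≫ f ≫ biprod.fst) ≫ β := by simp
    _ = 𝟙 A := hαβ
  have hafst : a ≫ biprod.fst = α := by rw [ha, hα]; simp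
  set p : A ⊞ Y ⟶ A ⊞ Y := b ≫ a with hp
  have hpp : p ≫ p = p := by
    rw [hp]
    calc (b ≫ a) ≫ b ≫ a = b ≫ (a ≫ b) ≫ a := by simp
    _ = b ≫ a := by rw [hab]; simp
  have hfp : f ≫ p = p := by
    rw [hp, hb]
    calc f ≫ (f ≫ biprod.fst ≫ β) ≫ a = (f ≫ f) ≫ (biprod.fst ≫ β) ≫ a := by simp
    _ = f ≫ (biprod.fst ≫ β) ≫ a := by rw [hf]
    _ = (f ≫ biprod.fst ≫ β) ≫ a := by simp
  have hpf : p ≫ f = p := by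
    rw [hp, ha]
    calc (b ≫ biprod.inl ≫ f) ≫ f = b ≫ biprod.inl ≫ (f ≫ f) := by simp
    _ = b ≫ biprod.inl ≫ f := by rw [hf]
  set q : A ⊞ Y ⟶ A ⊞ Y := 𝟙 (A ⊞ Y) - p with hq
  have hqq : q ≫ q = q := by
    rw [hq]; simp only [Preadditive.sub_comp, Preadditive.comp_sub, Category.id_comp,
      Category.comp_id, hpp]; abel
  set t : Y ⟶ A := biprod.inr ≫ b with ht
  set s : A ⟶ Y := a ≫ biprod.snd with hs
  have htotal : (biprod.fst : A ⊞ Y ⟶ A) ≫ biprod.inl + biprod.snd ≫ biprod.inr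
      = 𝟙 (A ⊞ Y) := biprod.total
  have hsndinr : (biprod.snd : A ⊞ Y ⟶ Y) ≫ biprod.inr
      = 𝟙 (A ⊞ Y) - biprod.fst ≫ biprod.inl := by
    rw [← htotal]; abel
  have hst : s ≫ t = 𝟙 A - α := by
    rw [hs, ht]
    calc (a ≫ biprod.snd) ≫ biprod.inr ≫ b = a ≫ (biprod.snd ≫ biprod.inr) ≫ b := by simp
    _ = a ≫ (𝟙 (A ⊞ Y) - biprod.fst ≫ biprod.inl) ≫ b := by rw [hsndinr]
    _ = a ≫ b - (a ≫ biprod.fst) ≫ (biprod.inl ≫ b) := by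
        simp [Preadditive.comp_sub, Preadditive.sub_comp]
    _ = 𝟙 A - α := by rw [hab, hafst, hinlb, Category.comp_id]
  set c : Y ⟶ Y := 𝟙 Y - t ≫ s with hc
  set cinv : Y ⟶ Y := 𝟙 Y + t ≫ β ≫ s with hcinv
  have hccinv : c ≫ cinv = 𝟙 Y := by
    rw [hc, hcinv]
    have expand : (𝟙 Y - t ≫ s) ≫ (𝟙 Y + t ≫ β ≫ s)
        = 𝟙 Y + t ≫ β ≫ s - t ≫ s - t ≫ ((s ≫ t) ≫ β) ≫ s := by
      simp only [Preadditive.sub_comp, Preadditive.comp_add, Preadditive.add_comp,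
        Category.id_comp, Category.comp_id, Category.assoc]
      abel
    rw [expand, hst]
    have h2 : t ≫ (((𝟙 A - α) ≫ β) ≫ s) = t ≫ β ≫ s - t ≫ s := by
      rw [Preadditive.sub_comp, Category.id_comp, hαβ]
      simp [Preadditive.sub_comp, Preadditive.comp_sub]
    rw [h2]; abel
  have hcinvc : cinv ≫ c = 𝟙 Y := by
    rw [hc, hcinv]
    have expand : (𝟙 Y + t ≫ β ≫ s) ≫ (𝟙 Y - t ≫ s)
        = 𝟙 Y - t ≫ s + t ≫ β ≫ s - t ≫ (β ≫ (s ≫ t)) ≫ s := by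
      simp only [Preadditive.sub_comp, Preadditive.comp_sub, Preadditive.comp_add,
        Preadditive.add_comp, Category.id_comp, Category.comp_id, Category.assoc]
      abel
    rw [expand, hst]
    have h2 : t ≫ ((β ≫ (𝟙 A - α)) ≫ s) = t ≫ β ≫ s - t ≫ s := by
      rw [Preadditive.comp_sub, Category.comp_id, hβα]
      simp [Preadditive.sub_comp, Preadditive.comp_sub]
    rw [h2]; abel
  have hinrqsnd : biprod.inr ≫ q ≫ biprod.snd = c := by
    rw [hq, hc, hp]
    simp only [Preadditive.comp_sub, Preadditive.sub_comp, Category.id_comp,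
      Category.comp_id, biprod.inr_snd]
    congr 1
    rw [ht, hs]; simp
  set j : Y ⟶ A ⊞ Y := cinv ≫ biprod.inr ≫ q with hj
  set r : A ⊞ Y ⟶ Y := q ≫ biprod.snd with hr
  have hjr : j ≫ r = 𝟙 Y := by
    rw [hj, hr]
    calc (cinv ≫ biprod.inr ≫ q) ≫ q ≫ biprod.snd
        = cinv ≫ biprod.inr ≫ (q ≫ q) ≫ biprod.snd := by simp
    _ = cinv ≫ biprod.inr ≫ q ≫ biprod.snd := by rw [hqq]
    _ = cinv ≫ c := by rw [hinrqsnd]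
    _ = 𝟙 Y := hcinvc
  -- the key computation : r ≫ j = q
  have hqb : q ≫ b = 0 := by
    rw [hq, hp]
    simp only [Preadditive.sub_comp, Category.id_comp, Category.assoc]
    rw [hab, Category.comp_id, sub_self]
  have hqfst : q ≫ biprod.fst = biprod.fst - b ≫ α := by
    rw [hq, hp]
    simp only [Preadditive.sub_comp, Category.id_comp, Category.assoc]
    rw [hafst]
  have hinlq : biprod.inl ≫ q = biprod.inl - a := by
    rw [hq, hp]
    simp only [Preadditive.comp_sub, Category.comp_id]
    rw [← Category.assoc, hinlb, Category.id_comp]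
  have haq : a ≫ q = 0 := by
    rw [hq, hp]
    simp only [Preadditive.comp_sub, Category.comp_id]
    rw [← Category.assoc, hab, Category.id_comp, sub_self]
  have hqsndt : (q ≫ biprod.snd) ≫ t = b ≫ α - biprod.fst := by
    rw [ht]
    calc (q ≫ biprod.snd) ≫ biprod.inr ≫ b = q ≫ (biprod.snd ≫ biprod.inr) ≫ b := by simp
    _ = q ≫ (𝟙 (A ⊞ Y) - biprod.fst ≫ biprod.inl) ≫ b := by rw [hsndinr]
    _ = q ≫ b - (q ≫ biprod.fst) ≫ biprod.inl ≫ b := by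
        simp [Preadditive.comp_sub, Preadditive.sub_comp]
    _ = 0 - (biprod.fst - b ≫ α) ≫ 𝟙 A := by rw [hqb, hqfst, hinlb]
    _ = b ≫ α - biprod.fst := by rw [Category.comp_id, zero_sub]; abel
  have hsinrq : s ≫ biprod.inr ≫ q = α ≫ a - α ≫ biprod.inl := by
    rw [hs]
    calc (a ≫ biprod.snd) ≫ biprod.inr ≫ q = a ≫ (biprod.snd ≫ biprod.inr) ≫ q := by simp
    _ = a ≫ (𝟙 (A ⊞ Y) - biprod.fst ≫ biprod.inl) ≫ q := by rw [hsndinr]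
    _ = a ≫ q - (a ≫ biprod.fst) ≫ biprod.inl ≫ q := by
        simp [Preadditive.comp_sub, Preadditive.sub_comp]
    _ = 0 - α ≫ (biprod.inl - a) := by rw [haq, hafst, hinlq]
    _ = α ≫ a - α ≫ biprod.inl := by
        simp only [Preadditive.comp_sub, zero_sub]; abel
  have hrj : r ≫ j = q := by
    rw [hr, hj, hcinv]
    have expand : (q ≫ biprod.snd) ≫ (𝟙 Y + t ≫ β ≫ s) ≫ biprod.inr ≫ q
        = q ≫ (biprod.snd ≫ biprod.inr) ≫ q
          + ((q ≫ biprod.snd) ≫ t) ≫ β ≫ (s ≫ biprod.inr ≫ q) := by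
      simp only [Preadditive.add_comp, Preadditive.comp_add, Category.id_comp,
        Category.assoc]
    rw [expand, hsndinr, hqsndt, hsinrq]
    have h1 : q ≫ (𝟙 (A ⊞ Y) - biprod.fst ≫ biprod.inl) ≫ q
        = q - (biprod.fst - b ≫ α) ≫ (biprod.inl - a) := by
      have h1' : q ≫ (𝟙 (A ⊞ Y) - biprod.fst ≫ biprod.inl) ≫ q
          = q ≫ q - (q ≫ biprod.fst) ≫ (biprod.inl ≫ q) := by
        simp [Preadditive.comp_sub, Preadditive.sub_comp]
      rw [h1', hqq, hqfst, hinlq]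
    rw [h1]
    have h2 : (b ≫ α - biprod.fst) ≫ β ≫ (α ≫ a - α ≫ biprod.inl)
        = (b ≫ α - biprod.fst) ≫ (a - biprod.inl) := by
      have hβa : β ≫ (α ≫ a - α ≫ biprod.inl) = a - biprod.inl := by
        rw [Preadditive.comp_sub, ← Category.assoc β α a, ← Category.assoc β α biprod.inl,
          hβα, Category.id_comp, Category.id_comp]
      rw [hβa]
    rw [h2]
    have h3 : (biprod.fst - b ≫ α) ≫ (biprod.inl - a)
        = (b ≫ α - biprod.fst) ≫ (a - biprod.inl) := by
      simp only [Preadditive.sub_comp, Preadditive.comp_sub]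
      abel
    rw [h3]; abel
  refine ⟨a, b, j, r, hab, hjr, ?_, ?_, ?_⟩
  · rw [hrj, hq]
  · exact hfp
  · exact hpf

end Aux

section Main

variable {C : Type u} [Category.{v} C] [Preadditive C] [HasFiniteBiproducts C]

attribute [local instance] CategoryTheory.Limits.hasBinaryBiproducts_of_finite_biproducts

/-- Splitting off the first summand of a biproduct over `Fin (m+1)`. -/
noncomputable def biproductFinSuccIso (m : ℕ) (F : Fin (m + 1) → C) :
    (⨁ F) ≅ F 0 ⊞ ⨁ (fun j : Fin m => F j.succ) where
  hom := biprod.lift (biproduct.π F 0) (biproduct.lift fun j => biproduct.π F j.succ)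
  inv := biprod.desc (biproduct.ι F 0) (biproduct.desc fun j => biproduct.ι F j.succ)
  hom_inv_id := by
    rw [biprod.lift_desc, biproduct.lift_desc, ← biproduct.total, Fin.sum_univ_succ]
  inv_hom_id := by
    ext
    · simp
    · rename_i j
      simp [biproduct.ι_π, Ne.symm (Fin.succ_ne_zero j)]
    · rename_i j
      simp [biproduct.ι_π, Fin.succ_ne_zero j]
    · rename_i j j'
      by_cases h : j = j'
      · subst h; simp
      · have h' : Fin.succ j ≠ Fin.succ j' := fun hc => h (Fin.succ_injective _ hc)
        simp [biproduct.ι_π, h, h']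

variable (n : ℕ) (Cobj : Fin n → C) (hloc : ∀ i : Fin n, IsLocalRing (End (Cobj i)))

include hloc in
lemma splits_on_biproduct :
    ∀ (m : ℕ) (g : Fin m → Fin n) (e : (⨁ fun j : Fin m => Cobj (g j)) ⟶
        (⨁ fun j : Fin m => Cobj (g j))), e ≫ e = e → Splits e := by
  intro m
  induction m with
  | zero =>
    intro g e he
    have : e = 𝟙 _ := by apply biproduct.hom_ext; intro j; exact j.elim0
    exact ⟨_, 𝟙 _, 𝟙 _, by simp, by simp [this]⟩
  | succ m ih =>
    intro g
    set F : Fin (m + 1) → C := fun j => Cobj (g j) with hF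
    intro e he
    set A : C := F 0 with hA
    set Y : C := ⨁ (fun j : Fin m => F j.succ) with hY
    set h : (⨁ F) ≅ A ⊞ Y := biproductFinSuccIso m F with hh
    apply splits_of_iso h
    set f : A ⊞ Y ⟶ A ⊞ Y := h.inv ≫ e ≫ h.hom with hf
    have hff : f ≫ f = f := by
      rw [hf]
      calc (h.inv ≫ e ≫ h.hom) ≫ h.inv ≫ e ≫ h.hom
          = h.inv ≫ (e ≫ e) ≫ h.hom := by simp
      _ = h.inv ≫ e ≫ h.hom := by rw [he]
    haveI : IsLocalRing (End A) := hloc (g 0)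
    have hf2 : ∃ f₂ : A ⊞ Y ⟶ A ⊞ Y, f₂ = 𝟙 (A ⊞ Y) - f := ⟨_, rfl⟩
    obtain ⟨f₂, hf₂⟩ := hf2
    have hf₂f₂ : f₂ ≫ f₂ = f₂ := by
      rw [hf₂]
      simp only [Preadditive.sub_comp, Preadditive.comp_sub, Category.id_comp,
        Category.comp_id]
      rw [hff]; abel
    obtain ⟨α₁, hα₁⟩ : ∃ α : End A, (α : A ⟶ A) = biprod.inl ≫ f ≫ biprod.fst := ⟨_, rfl⟩
    obtain ⟨α₂, hα₂⟩ : ∃ α : End A, (α : A ⟶ A) = biprod.inl ≫ f₂ ≫ biprod.fst := ⟨_, rfl⟩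
    have hsum : α₁ + α₂ = 1 := by
      have h1 : (α₁ + α₂ : A ⟶ A) = 𝟙 A := by
        rw [hα₁, hα₂, hf₂]
        simp only [Preadditive.sub_comp, Preadditive.comp_sub, Category.id_comp,
          biprod.inl_fst]
        abel
      exact h1
    rcases IsLocalRing.isUnit_or_isUnit_of_add_one hsum with hu | hu
    · -- (1,1) entry of f is a unit
      obtain ⟨a, b, j, r, hab, hjr, hrj, hfp, hpf⟩ := core f hff α₁ hα₁ hu
      set p : A ⊞ Y ⟶ A ⊞ Y := b ≫ a with hp
      have hpp : p ≫ p = p := by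
        rw [hp]
        calc (b ≫ a) ≫ b ≫ a = b ≫ (a ≫ b) ≫ a := by simp
        _ = b ≫ a := by rw [hab]; simp
      have hamono : Mono a := ⟨fun {W} u v huv => by
        have := congrArg (· ≫ b) huv
        simpa [hab] using this⟩
      have hjmono : Mono j := ⟨fun {W} u v huv => by
        have := congrArg (· ≫ r) huv
        simpa [hjr] using this⟩
      have hjp : j ≫ p = 0 := by
        have hjrj : j ≫ (r ≫ j) = j := by rw [← Category.assoc, hjr, Category.id_comp]
        rw [hrj, Preadditive.comp_sub, Category.comp_id, sub_eq_self] at hjrj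
        exact hjrj
      have hjb : j ≫ b = 0 := by
        apply hamono.right_cancellation
        rw [Category.assoc]
        rw [hp] at hjp
        rw [hjp, Limits.zero_comp]
      have hap : a ≫ p = a := by
        rw [hp, ← Category.assoc, hab, Category.id_comp]
      have har : a ≫ r = 0 := by
        apply hjmono.right_cancellation
        rw [Category.assoc, hrj, Preadditive.comp_sub, Category.comp_id, hap,
          sub_self, Limits.zero_comp]
      set e' : A ⊞ Y ⟶ A ⊞ Y := f - p with he'
      have hfp' : f ≫ p = p := hfp
      have hpf' : p ≫ f = p := hpf
      have he'e' : e' ≫ e' = e' := by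
        rw [he']
        simp only [Preadditive.sub_comp, Preadditive.comp_sub]
        rw [hff, hfp', hpf', hpp]; abel
      have hpe' : p ≫ e' = 0 := by
        rw [he', Preadditive.comp_sub, hpf', hpp, sub_self]
      have he'p : e' ≫ p = 0 := by
        rw [he', Preadditive.sub_comp, hfp', hpp, sub_self]
      have hrje' : (r ≫ j) ≫ e' = e' := by
        rw [hrj, Preadditive.sub_comp, Category.id_comp, hpe', sub_zero]
      have he'rj : e' ≫ (r ≫ j) = e' := by
        rw [hrj, Preadditive.comp_sub, Category.comp_id, he'p, sub_zero]
      set e'' : Y ⟶ Y := j ≫ e' ≫ r with he''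
      have he''e'' : e'' ≫ e'' = e'' := by
        rw [he'']
        calc (j ≫ e' ≫ r) ≫ j ≫ e' ≫ r = j ≫ e' ≫ ((r ≫ j) ≫ e') ≫ r := by simp
        _ = j ≫ (e' ≫ e') ≫ r := by rw [hrje']; simp
        _ = j ≫ e' ≫ r := by rw [he'e']
      obtain ⟨Z, i₂, p₂, hi₂p₂, hp₂i₂⟩ := ih (fun j => g j.succ) e'' he''e''
      refine ⟨A ⊞ Z, biprod.desc a (i₂ ≫ j), biprod.lift b (r ≫ p₂), ?_, ?_⟩
      · ext
        · simp [hab]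
        · simp only [biprod.inl_desc_assoc, biprod.lift_snd, Category.assoc,
            biprod.inr_snd, Category.comp_id]
          rw [← Category.assoc, har, Limits.zero_comp]
          simp
        · simp only [biprod.inr_desc_assoc, biprod.lift_fst, Category.assoc]
          rw [hjb]
          simp
        · simp only [biprod.inr_desc_assoc, biprod.lift_snd, Category.assoc]
          rw [← Category.assoc, ← Category.assoc]
          rw [Category.assoc i₂ j r, hjr, Category.comp_id, hi₂p₂]
          simp
      · rw [biprod.lift_desc]
        have : (r ≫ p₂) ≫ i₂ ≫ j = e' := by
          calc (r ≫ p₂) ≫ i₂ ≫ j = r ≫ (p₂ ≫ i₂) ≫ j := by simp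
          _ = r ≫ e'' ≫ j := by rw [hp₂i₂]
          _ = r ≫ (j ≫ e' ≫ r) ≫ j := by rw [he'']
          _ = (r ≫ j) ≫ e' ≫ (r ≫ j) := by simp
          _ = e' := by rw [← Category.assoc, hrje', he'rj]
        rw [this, he', ← hp]
        abel
    · -- (1,1) entry of 1 - f is a unit
      obtain ⟨a, b, j, r, hab, hjr, hrj, hf₂p, hpf₂⟩ := core f₂ hf₂f₂ α₂ hα₂ hu
      set p : A ⊞ Y ⟶ A ⊞ Y := b ≫ a with hp
      have hfp0 : f ≫ p = 0 := by
        have := hf₂p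
        rw [hf₂, Preadditive.sub_comp, Category.id_comp, sub_eq_self] at this
        rw [hp, ← Category.assoc]
        rw [hp, ← Category.assoc] at this
        exact this
      have hpf0 : p ≫ f = 0 := by
        have := hpf₂
        rw [hf₂, Preadditive.comp_sub, Category.comp_id, sub_eq_self] at this
        rw [hp, Category.assoc]
        rw [hp, Category.assoc] at this
        exact this
      have hrjf : (r ≫ j) ≫ f = f := by
        rw [hrj, Preadditive.sub_comp, Category.id_comp, hpf0, sub_zero]
      have hfrj : f ≫ (r ≫ j) = f := by
        rw [hrj, Preadditive.comp_sub, Category.comp_id, hfp0, sub_zero]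
      set e'' : Y ⟶ Y := j ≫ f ≫ r with he''
      have he''e'' : e'' ≫ e'' = e'' := by
        rw [he'']
        calc (j ≫ f ≫ r) ≫ j ≫ f ≫ r = j ≫ f ≫ ((r ≫ j) ≫ f) ≫ r := by simp
        _ = j ≫ (f ≫ f) ≫ r := by rw [hrjf]; simp
        _ = j ≫ f ≫ r := by rw [hff]
      obtain ⟨Z, i₂, p₂, hi₂p₂, hp₂i₂⟩ := ih (fun j => g j.succ) e'' he''e''
      refine ⟨Z, i₂ ≫ j, r ≫ p₂, ?_, ?_⟩
      · rw [Category.assoc, ← Category.assoc j r, hjr, Category.id_comp, hi₂p₂]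
      · calc (r ≫ p₂) ≫ i₂ ≫ j = r ≫ (p₂ ≫ i₂) ≫ j := by simp
        _ = r ≫ e'' ≫ j := by rw [hp₂i₂]
        _ = (r ≫ j) ≫ f ≫ (r ≫ j) := by rw [he'']; simp
        _ = f := by rw [← Category.assoc, hrjf, hfrj]

end Main

/-- Let `C` be a `k`-linear, Hom-finite additive category additively
generated by objects `C₁, …, Cₙ` such that each endomorphism ring `End(Cᵢ)` is local.
Then `C` is idempotent split: every idempotent endomorphism in `C` splits. -/
theorem idempotentComplete_of_local_generators
    (k : Type*) [Field k]
    (C : Type u) [Category.{v} C] [Preadditive C] [CategoryTheory.Linear k C]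
    [HasFiniteBiproducts C]
    (hfin : ∀ X Y : C, FiniteDimensional k (X ⟶ Y))
    (n : ℕ) (Cobj : Fin n → C)
    (hgen : ∀ X : C, ∃ (m : ℕ) (g : Fin m → Fin n),
      Nonempty (X ≅ ⨁ (fun j : Fin m => Cobj (g j))))
    (hloc : ∀ i : Fin n, IsLocalRing (End (Cobj i))) :
    IsIdempotentComplete C := by
  constructor
  intro X p hp
  obtain ⟨m, g, ⟨h⟩⟩ := hgen X
  have hs : Splits (h.inv ≫ p ≫ h.hom) := by
    apply splits_on_biproduct n Cobj hloc m g
    calc (h.inv ≫ p ≫ h.hom) ≫ h.inv ≫ p ≫ h.hom = h.inv ≫ (p ≫ p) ≫ h.hom := by simp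
    _ = h.inv ≫ p ≫ h.hom := by rw [hp]
  obtain ⟨Y, i, e, h1, h2⟩ := splits_of_iso h p hs
  exact ⟨Y, i, e, h1, h2⟩

end LocalIdempotentSplit
end

section
/- Let i_* : A₁ → A be the inclusion of a colocalising Serre subcategory of an abelian category A, let j^* : A → A/A₁ be the quotient functor and j_! its (fully faithful) left adjoint. Then i_* admits a left adjoint i^* : A → A₁, and for every A ∈ A the adjunction morphisms fit into an exact sequence j_!j^*A → A → i_*i^*A → 0, so i_*i^*A is the cokernel of the counit ε_A : j_!j^*A → A. -/
open CategoryTheory CategoryTheory.Limits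

universe v₁ v₂ v₃ u₁ u₂ u₃

namespace Colocalising

/-- Let `i : A₁ → A` be the inclusion of a colocalising Serre
subcategory of an abelian category `A`: `A₁` is (the essential image of a fully faithful
exact functor identified with) the kernel of the exact quotient functor
`j^* : A → A/A₁ = Q`, and `j^*` admits a (fully faithful) left adjoint `j_!`.
Then `i` admits a left adjoint `i^* : A → A₁`, and for every `X ∈ A` the adjunction
morphisms fit into an exact sequence `j_!j^*X → X → i(i^*X) → 0`; in particular
`i(i^*X)` is the cokernel of the counit `ε_X : j_!j^*X → X`. -/
theorem colocalising_left_adjoint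
    {A : Type u₁} [Category.{v₁} A] [Abelian A]
    {Q : Type u₂} [Category.{v₂} Q] [Abelian Q]
    {A₁ : Type u₃} [Category.{v₃} A₁] [Abelian A₁]
    -- the quotient functor `j^* : A ⥤ Q`: exact and essentially surjective
    (jstar : A ⥤ Q) [jstar.EssSurj]
    (_ : Nonempty (PreservesFiniteLimits jstar)) (_ : Nonempty (PreservesFiniteColimits jstar))
    -- its fully faithful left adjoint `j_!`
    (jshriek : Q ⥤ A) [jshriek.Full] [jshriek.Faithful]
    (adjQ : jshriek ⊣ jstar)
    -- the inclusion `i` of the Serre subcategory `A₁ = ker j^*`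
    (i : A₁ ⥤ A) [i.Full] [i.Faithful]
    (_ : Nonempty (PreservesFiniteLimits i)) (_ : Nonempty (PreservesFiniteColimits i))
    (hker : ∀ X : A, IsZero (jstar.obj X) ↔ ∃ Y : A₁, Nonempty (X ≅ i.obj Y)) :
    ∃ (istar : A ⥤ A₁) (adj₂ : istar ⊣ i),
      ∀ X : A, ∃ w : adjQ.counit.app X ≫ adj₂.unit.app X = 0,
        Epi (adj₂.unit.app X) ∧
        (ShortComplex.mk (adjQ.counit.app X) (adj₂.unit.app X) w).Exact := by
  have hjc : PreservesFiniteColimits jstar := Nonempty.some (by assumption)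
  -- `j^*` of the counit is an isomorphism
  have hiso : ∀ X : A, IsIso (jstar.map (adjQ.counit.app X)) := by
    intro X
    have h1 : IsIso (adjQ.unit.app (jstar.obj X) ≫ jstar.map (adjQ.counit.app X)) := by
      rw [adjQ.right_triangle_components]; exact IsIso.id _
    exact IsIso.of_isIso_comp_left (adjQ.unit.app (jstar.obj X)) _
  -- the cokernel of the counit is killed by `j^*`
  have hz : ∀ X : A, IsZero (jstar.obj (cokernel (adjQ.counit.app X))) := by
    intro X
    have := hiso X
    have e : jstar.obj (cokernel (adjQ.counit.app X)) ≅
        cokernel (jstar.map (adjQ.counit.app X)) := PreservesCokernel.iso jstar _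
    exact IsZero.of_iso (IsZero.of_iso (isZero_zero Q) (cokernel.ofEpi _)) e
  -- there are no nonzero maps `j_! W ⟶ i Z`
  have hzero : ∀ (W : Q) (Z : A₁) (f : jshriek.obj W ⟶ i.obj Z), f = 0 := by
    intro W Z f
    have hZ : IsZero (jstar.obj (i.obj Z)) := (hker _).mpr ⟨Z, ⟨Iso.refl _⟩⟩
    have h0 : adjQ.homEquiv W (i.obj Z) f = 0 := hZ.eq_of_tgt _ _
    have := congrArg (adjQ.homEquiv W (i.obj Z)).symm h0
    simpa [Adjunction.homEquiv_counit] using this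
  -- precomposition with the counit kills any map to `i Z`
  have hcomp : ∀ (X : A) (Z : A₁) (f : X ⟶ i.obj Z), adjQ.counit.app X ≫ f = 0 := by
    intro X Z f; exact hzero _ _ _
  -- choose objects of `A₁` realizing the cokernels
  choose Yo eiso using fun X : A => ((hker _).mp (hz X))
  let eI : ∀ X : A, cokernel (adjQ.counit.app X) ≅ i.obj (Yo X) := fun X => (eiso X).some
  let u : ∀ X : A, X ⟶ i.obj (Yo X) := fun X => cokernel.π _ ≫ (eI X).hom
  have hu0 : ∀ X : A, adjQ.counit.app X ≫ u X = 0 := by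
    intro X; simp [u, cokernel.condition_assoc]
  -- the hom-set equivalence
  let e : ∀ (X : A) (Z : A₁), (Yo X ⟶ Z) ≃ (X ⟶ i.obj Z) := fun X Z =>
    { toFun := fun g => u X ≫ i.map g
      invFun := fun f => i.preimage ((eI X).inv ≫ cokernel.desc _ f (hcomp X Z f))
      left_inv := by
        intro g
        apply i.map_injective
        rw [Functor.map_preimage, Iso.inv_comp_eq]
        apply coequalizer.hom_ext
        simp [u]
      right_inv := by
        intro f
        simp only [u, Functor.map_preimage, Category.assoc, Iso.hom_inv_id_assoc,
          cokernel.π_desc] }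
  have he : ∀ (X : A) (Z Z' : A₁) (g : Z ⟶ Z') (h : Yo X ⟶ Z),
      e X Z' (h ≫ g) = e X Z h ≫ i.map g := by
    intro X Z Z' g h
    simp [e]
  refine ⟨Adjunction.leftAdjointOfEquiv e he, Adjunction.adjunctionOfEquivLeft e he, fun X => ?_⟩
  have hu : (Adjunction.adjunctionOfEquivLeft e he).unit.app X = u X := by
    simp [Adjunction.adjunctionOfEquivLeft, Adjunction.mkOfHomEquiv, e]
  have w : adjQ.counit.app X ≫ (Adjunction.adjunctionOfEquivLeft e he).unit.app X = 0 := by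
    rw [hu]; exact hu0 X
  refine ⟨w, ?_, ?_⟩
  · rw [hu]
    exact epi_comp _ _
  · apply ShortComplex.exact_of_g_is_cokernel
    refine CokernelCofork.IsColimit.ofπ _ _
      (fun {Z'} x hx => (eI X).inv ≫ cokernel.desc _ x hx) ?_ ?_
    · intro Z' x hx
      dsimp only [ShortComplex.mk] at x hx ⊢
      rw [hu]
      simp [u]
    · intro Z' x hx m hm
      dsimp only [ShortComplex.mk] at x hx m hm ⊢
      rw [hu] at hm
      rw [Iso.eq_inv_comp]
      apply coequalizer.hom_ext
      simpa [u] using hm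
end Colocalising
end
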